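/- Let x ∈ X and let P_x = {λ ∈ Λ : p_λ(x) ≠ 0}. Then x is fixed by C_r if and only if all partitions in P_x have the same r-core. Moreover, for each r-core κ ∈ Λ there is a unique connected component X^{r,κ} of the C_r-fixed locus X^r, consisting of exactly those C_r-fixed points x for which every λ ∈ P_x satisfies core^r(λ) = κ. -/

import Mathlib

open Polynomial

noncomputable section

/-! ### The Grassmannian `X = Gr(d, ℂ_{n-1}[z])` and the Wronski map -/

/-- The Wronskian determinant of a `d`-tuple of polynomials. -/
def wronskDet (d : ℕ) (f : Fin d → Polynomial ℂ) : Polynomial ℂ :=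
  Matrix.det (Matrix.of fun i j : Fin d =>
    (fun p : Polynomial ℂ => Polynomial.derivative p)^[(j : ℕ)] (f i))

/-- `x` is a point of the Grassmannian `Gr(d, ℂ_{n-1}[z])`. -/
def IsGrPoint (n d : ℕ) (x : Submodule ℂ (Polynomial ℂ)) : Prop :=
  x ≤ Polynomial.degreeLT ℂ n ∧ Module.finrank ℂ x = d

/-- `x` lies in the fibre of the Wronski map over `h` (an element of the
projective space `ℙ(ℂ_N[z])`, i.e. the Wronskian of a basis of `x` is a nonzero
scalar multiple of `h`). -/
def InFibre (d : ℕ) (x : Submodule ℂ (Polynomial ℂ)) (h : Polynomial ℂ) : Prop :=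
  ∃ (f : Fin d → Polynomial ℂ) (c : ℂ), c ≠ 0 ∧ LinearIndependent ℂ f ∧
    Submodule.span ℂ (Set.range f) = x ∧ wronskDet d f = c • h

/-- The linear substitution `f(z) ↦ f(c·z)` on polynomials. -/
def rotMap (c : ℂ) : Polynomial ℂ →ₗ[ℂ] Polynomial ℂ :=
  (Polynomial.aeval (Polynomial.C c * Polynomial.X) :
    Polynomial ℂ →ₐ[ℂ] Polynomial ℂ).toLinearMap

/-- `x` is fixed by the cyclic group `C_r ⊂ PGL₂(ℂ)` of classes of
`diag(e^{πij/r}, e^{-πij/r})`, `j = 0, …, r-1`; the induced (projective) action on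
`Gr(d, ℂ_{n-1}[z])` is via the substitutions `z ↦ e^{-2πij/r} z`. -/
def CrFixed (r : ℕ) (x : Submodule ℂ (Polynomial ℂ)) : Prop :=
  ∀ j : Fin r,
    Submodule.map
      (rotMap (Complex.exp (-(2 * (Real.pi : ℂ) * Complex.I * ((j : ℕ) : ℂ)) / (r : ℂ)))) x = x

/-- The linear map `f(z) ↦ z^{n-1} f(1/z)` on `ℂ_{n-1}[z]`,
realizing the reflection `(0 1; 1 0) ∈ PGL₂(ℂ)`. -/
def reflectMap (n : ℕ) : Polynomial ℂ →ₗ[ℂ] Polynomial ℂ :=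
  ∑ k ∈ Finset.range n,
    (Polynomial.lcoeff ℂ k).smulRight ((Polynomial.X : Polynomial ℂ) ^ (n - 1 - k))

/-- `x` is fixed by the dihedral group `D_r ⊂ PGL₂(ℂ)` generated by `C_r` and the
reflection `z ↦ 1/z`. -/
def DrFixed (n r : ℕ) (x : Submodule ℂ (Polynomial ℂ)) : Prop :=
  CrFixed r x ∧ Submodule.map (reflectMap n) x = x

/-! ### Partitions, Richardson varieties, compatibility -/

/-- A partition with at most `d` parts, each of size at most `w`
(recorded as a function `ℕ → ℕ` vanishing from index `d` on; part `i` (0-based)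
is the `(i+1)`-st part). -/
structure PartitionIn (d w : ℕ) where
  part : ℕ → ℕ
  antitone : ∀ ⦃i j : ℕ⦄, i ≤ j → part j ≤ part i
  le_w : ∀ i, part i ≤ w
  eq_zero : ∀ i, d ≤ i → part i = 0

/-- The size `|λ|` of a partition. -/
def PartitionIn.size {d w : ℕ} (lam : PartitionIn d w) : ℕ :=
  ∑ i ∈ Finset.range d, lam.part i

/-- Containment `μ ⊆ λ` of partitions. -/
def SubPartition {d w : ℕ} (mu lam : PartitionIn d w) : Prop :=
  ∀ i, mu.part i ≤ lam.part i

/-- The full rectangular partition `(w)^d`. -/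
def rectPart (d w : ℕ) : PartitionIn d w :=
  { part := fun i => if i < d then w else 0
    antitone := by
      intro i j hij
      by_cases hj : j < d
      · have hi : i < d := lt_of_le_of_lt hij hj
        simp [hi, hj]
      · simp [hj]
    le_w := by intro i; by_cases hi : i < d <;> simp [hi]
    eq_zero := by intro i hi; simp [Nat.not_lt.mpr hi] }

/-- The empty partition. -/
def zeroPart (d w : ℕ) : PartitionIn d w :=
  { part := fun _ => 0
    antitone := by intro i j _; exact le_rfl
    le_w := fun _ => Nat.zero_le _
    eq_zero := fun _ _ => rfl }

/-- The flag `F_i = z^{n-i} ℂ_{i-1}[z]` inside `ℂ_{n-1}[z]`. -/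
def Fflag (n i : ℕ) : Submodule ℂ (Polynomial ℂ) :=
  Polynomial.degreeLT ℂ n ⊓
    Submodule.restrictScalars ℂ (Ideal.span {(Polynomial.X : Polynomial ℂ) ^ (n - i)})

/-- The flag `F̃_i = ℂ_{i-1}[z]`. -/
def Ftilde (i : ℕ) : Submodule ℂ (Polynomial ℂ) := Polynomial.degreeLT ℂ i

/-- Membership in the Richardson variety `X_{λ/μ}`. -/
def InRichardson (n d : ℕ) (lam mu : PartitionIn d (n - d))
    (x : Submodule ℂ (Polynomial ℂ)) : Prop :=
  ∀ i : ℕ, i < d →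
    i + 1 ≤ Module.finrank ℂ ↥(x ⊓ Fflag n (n - d - mu.part i + (i + 1))) ∧
    i + 1 ≤ Module.finrank ℂ ↥(x ⊓ Ftilde (lam.part (d - 1 - i) + (i + 1)))

/-- The Richardson variety `X_{λ/μ}` is compatible with the polynomial `h`:
`μ ⊆ λ`, `|λ| = deg h` and `|μ| = mindeg h`. -/
def Compatible (n d : ℕ) (lam mu : PartitionIn d (n - d)) (h : Polynomial ℂ) : Prop :=
  SubPartition mu lam ∧ lam.size = h.natDegree ∧ mu.size = h.rootMultiplicity 0

/-! ### Ribbons and tableaux -/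

/-- Two boxes (row, column) are adjacent. -/
def BoxAdj (p q : ℕ × ℕ) : Prop :=
  (p.1 = q.1 ∧ (p.2 + 1 = q.2 ∨ q.2 + 1 = p.2)) ∨
  (p.2 = q.2 ∧ (p.1 + 1 = q.1 ∨ q.1 + 1 = p.1))

/-- A set of boxes is an `r`-ribbon: it has `r` boxes, is connected,
and contains no 2×2 square. -/
def IsRibbon (r : ℕ) (S : Set (ℕ × ℕ)) : Prop :=
  S.ncard = r ∧
  (∀ p ∈ S, ∀ q ∈ S, Relation.ReflTransGen (fun u v => u ∈ S ∧ v ∈ S ∧ BoxAdj u v) p q) ∧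
  ¬ ∃ i j : ℕ, (i, j) ∈ S ∧ (i + 1, j) ∈ S ∧ (i, j + 1) ∈ S ∧ (i + 1, j + 1) ∈ S

/-- The box `(i,j)` (0-based row and column) lies in the skew diagram `λ/μ`. -/
def InShape {d w : ℕ} (lam mu : PartitionIn d w) (i j : ℕ) : Prop :=
  i < d ∧ mu.part i ≤ j ∧ j < lam.part i

/-- `E` is a standard `r`-ribbon tableau of skew shape `λ/μ` with entries `1, …, ℓ`
(recorded as a function on boxes, normalized to `0` off the shape). -/
def IsSRT {d w : ℕ} (r ℓ : ℕ) (lam mu : PartitionIn d w) (E : ℕ → ℕ → ℕ) : Prop :=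
  (∀ i j, ¬ InShape lam mu i j → E i j = 0) ∧
  (∀ i j, InShape lam mu i j → 1 ≤ E i j ∧ E i j ≤ ℓ) ∧
  (∀ i j j', InShape lam mu i j → InShape lam mu i j' → j ≤ j' → E i j ≤ E i j') ∧
  (∀ i i' j, InShape lam mu i j → InShape lam mu i' j → i ≤ i' → E i j ≤ E i' j) ∧
  (∀ k, 1 ≤ k → k ≤ ℓ → IsRibbon r {p : ℕ × ℕ | InShape lam mu p.1 p.2 ∧ E p.1 p.2 = k})

/-- A tableau (with boxes inside the `d × w` rectangle and largest entry `m`) is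
rotationally invariant: it is fixed by rotating `180°` inside the rectangle and
replacing each entry `k` by `m + 1 - k`. -/
def RotInvariant {d w : ℕ} (m : ℕ) (lam mu : PartitionIn d w) (E : ℕ → ℕ → ℕ) : Prop :=
  ∀ i j, InShape lam mu i j →
    InShape lam mu (d - 1 - i) (w - 1 - j) ∧
    E (d - 1 - i) (w - 1 - j) = m + 1 - E i j

/-- For `ℓ` even: a tableau of shape `λ/μ` with entries `1, …, ℓ-1`, in which the
boxes with entry `k ≠ ℓ/2` form `r`-ribbons and the boxes with entry `ℓ/2`
form a `2r`-ribbon. -/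
def IsHatSRT {d w : ℕ} (r ℓ : ℕ) (lam mu : PartitionIn d w) (E : ℕ → ℕ → ℕ) : Prop :=
  (∀ i j, ¬ InShape lam mu i j → E i j = 0) ∧
  (∀ i j, InShape lam mu i j → 1 ≤ E i j ∧ E i j ≤ ℓ - 1) ∧
  (∀ i j j', InShape lam mu i j → InShape lam mu i j' → j ≤ j' → E i j ≤ E i j') ∧
  (∀ i i' j, InShape lam mu i j → InShape lam mu i' j → i ≤ i' → E i j ≤ E i' j) ∧
  (∀ k, 1 ≤ k → k ≤ ℓ - 1 → k ≠ ℓ / 2 →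
    IsRibbon r {p : ℕ × ℕ | InShape lam mu p.1 p.2 ∧ E p.1 p.2 = k}) ∧
  IsRibbon (2 * r) {p : ℕ × ℕ | InShape lam mu p.1 p.2 ∧ E p.1 p.2 = ℓ / 2}

/-! ### Rectangular standard Young tableaux, promotion and evacuation -/

/-- `E` is a standard Young tableau of rectangular shape `d × w`
(normalized to `0` outside the rectangle). -/
def IsSYT (d w : ℕ) (E : ℕ → ℕ → ℕ) : Prop :=
  (∀ i j, d ≤ i ∨ w ≤ j → E i j = 0) ∧
  (∀ i j, i < d → j < w → 1 ≤ E i j ∧ E i j ≤ d * w) ∧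
  (∀ i j, i < d → j + 1 < w → E i j < E i (j + 1)) ∧
  (∀ i j, i + 1 < d → j < w → E i j < E (i + 1) j) ∧
  (∀ m, 1 ≤ m → m ≤ d * w → ∃ i j, i < d ∧ j < w ∧ E i j = m)

/-- One step of the jeu de taquin slide of the empty box, restricted to the
subtableau of entries `≤ i₀`: the empty box swaps with the smaller of its east
and south neighbours (among entries `≤ i₀`), if any. -/
def slideStep (d w i₀ : ℕ) (E : ℕ → ℕ → ℕ) (p : ℕ × ℕ) : ℕ × ℕ :=
  if (p.1 + 1 < d ∧ E (p.1 + 1) p.2 ≤ i₀) ∧ (p.2 + 1 < w ∧ E p.1 (p.2 + 1) ≤ i₀) then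
    (if E (p.1 + 1) p.2 < E p.1 (p.2 + 1) then (p.1 + 1, p.2) else (p.1, p.2 + 1))
  else if p.1 + 1 < d ∧ E (p.1 + 1) p.2 ≤ i₀ then (p.1 + 1, p.2)
  else if p.2 + 1 < w ∧ E p.1 (p.2 + 1) ≤ i₀ then (p.1, p.2 + 1)
  else p

/-- The path of the empty box in the jeu de taquin slide, starting in the
northwest corner. -/
def slidePath (d w i₀ : ℕ) (E : ℕ → ℕ → ℕ) : ℕ → ℕ × ℕ
  | 0 => (0, 0)
  | k + 1 => slideStep d w i₀ E (slidePath d w i₀ E k)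

/-- Promotion restricted to the entries `1, …, i₀` (the operator `𝑗_{i₀}`):
delete the entry `1`, slide the empty box through the entries `≤ i₀`, decrement
those entries by one and place `i₀` in the final empty box. -/
def partialPromo (d w i₀ : ℕ) (E : ℕ → ℕ → ℕ) : ℕ → ℕ → ℕ := fun i j =>
  if d ≤ i ∨ w ≤ j then 0
  else if (i, j) = slidePath d w i₀ E i₀ then i₀
  else if slidePath d w i₀ E (i + j) = (i, j) then
    E (slidePath d w i₀ E (i + j + 1)).1 (slidePath d w i₀ E (i + j + 1)).2 - 1
  else if E i j ≤ i₀ then E i j - 1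
  else E i j

/-- Jeu de taquin promotion `𝑗` on fillings of the `d × w` rectangle. -/
def promo (d w : ℕ) (E : ℕ → ℕ → ℕ) : ℕ → ℕ → ℕ := partialPromo d w (d * w) E

/-- `evacAux d w i = 𝑗_1 ∘ 𝑗_2 ∘ ⋯ ∘ 𝑗_i`. -/
def evacAux (d w : ℕ) : ℕ → (ℕ → ℕ → ℕ) → (ℕ → ℕ → ℕ)
  | 0, E => E
  | i + 1, E => evacAux d w i (partialPromo d w (i + 1) E)

/-- Evacuation `𝑒 = 𝑗_1 ∘ 𝑗_2 ∘ ⋯ ∘ 𝑗_N` on fillings of the `d × w` rectangle. -/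
def evac (d w : ℕ) (E : ℕ → ℕ → ℕ) : ℕ → ℕ → ℕ := evacAux d w (d * w) E

/-- The `C_r`-fixed polynomial `z^m (z^r + h_1) ⋯ (z^r + h_ℓ)`. -/
def crPoly (r m ℓ : ℕ) (hs : Fin ℓ → ℂ) : Polynomial ℂ :=
  Polynomial.X ^ m * ∏ i : Fin ℓ, (Polynomial.X ^ r + Polynomial.C (hs i))

/-- The product `∏ (z^r + a_i)(z^r + a_i⁻¹)` of generic inverse pairs. -/
def pairsPoly (r t : ℕ) (a : Fin t → ℂ) : Polynomial ℂ :=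
  ∏ i : Fin t,
    ((Polynomial.X ^ r + Polynomial.C (a i)) * (Polynomial.X ^ r + Polynomial.C (a i)⁻¹))

/-- A `D_r`-fixed polynomial of type (1). -/
def type1poly (r m t : ℕ) (ε : ℂ) (a : Fin t → ℂ) : Polynomial ℂ :=
  Polynomial.X ^ m * (Polynomial.X ^ r + Polynomial.C ε) * pairsPoly r t a

/-- A `D_r`-fixed polynomial of type (2). -/
def type2poly (r m t : ℕ) (a : Fin t → ℂ) : Polynomial ℂ :=
  Polynomial.X ^ m * pairsPoly r t a

/-- A `D_r`-fixed polynomial of type (3). -/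
def type3poly (r m t : ℕ) (a : Fin t → ℂ) : Polynomial ℂ :=
  Polynomial.X ^ m * (Polynomial.X ^ r + 1) * (Polynomial.X ^ r - 1) * pairsPoly r t a

/-- `x` is an even-odd point: it has a basis each of whose members is an even or
an odd polynomial. -/
def IsEvenOddPoint (d : ℕ) (x : Submodule ℂ (Polynomial ℂ)) : Prop :=
  ∃ f : Fin d → Polynomial ℂ, LinearIndependent ℂ f ∧
    Submodule.span ℂ (Set.range f) = x ∧
    ∀ i, (f i).comp (-Polynomial.X) = f i ∨ (f i).comp (-Polynomial.X) = -(f i)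

/-- `x` is a real point: it has a basis of polynomials with real coefficients. -/
def IsRealPoint (d : ℕ) (x : Submodule ℂ (Polynomial ℂ)) : Prop :=
  ∃ f : Fin d → Polynomial ℂ, LinearIndependent ℂ f ∧
    Submodule.span ℂ (Set.range f) = x ∧
    ∀ i k, ((f i).coeff k).im = 0

/-- The Möbius action of a matrix on `ℂℙ¹ = ℂ ∪ {∞}` (modelled by `Option ℂ`,
with `none` playing the role of `∞`). -/
def mobP1 (M : Matrix (Fin 2) (Fin 2) ℂ) : Option ℂ → Option ℂ := fun p =>
  match p with
  | none => if M 1 0 = 0 then none else some (M 0 0 / M 1 0)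
  | some a =>
      if M 1 0 * a + M 1 1 = 0 then none
      else some ((M 0 0 * a + M 0 1) / (M 1 0 * a + M 1 1))

/-- The action of a matrix `φ` on `ℂ_{n-1}[z] `:
`(φf)(z) = (φ₂₁ z + φ₁₁)^{n-1} f((φ₂₂ z + φ₁₂)/(φ₂₁ z + φ₁₁))`. -/
def mobiusMap (n : ℕ) (M : Matrix (Fin 2) (Fin 2) ℂ) : Polynomial ℂ →ₗ[ℂ] Polynomial ℂ :=
  ∑ k ∈ Finset.range n, (Polynomial.lcoeff ℂ k).smulRight
    ((Polynomial.C (M 1 1) * Polynomial.X + Polynomial.C (M 0 1)) ^ k *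
     (Polynomial.C (M 1 0) * Polynomial.X + Polynomial.C (M 0 0)) ^ (n - 1 - k))

/-- The polynomial `∏_{a_i ≠ ∞} (z + a_i)` attached to a tuple of points of `ℂℙ¹`. -/
def rootsPoly (N : ℕ) (a : Fin N → Option ℂ) : Polynomial ℂ :=
  ∏ i : Fin N, (a i).elim 1 (fun c => Polynomial.X + Polynomial.C c)

/-- The eigenspace `M_k`: the span of the monomials `z^j`, `j < n`, `j ≡ k (mod r)`. -/
def eigSpace (n r : ℕ) (k : Fin r) : Submodule ℂ (Polynomial ℂ) :=
  Submodule.span ℂ {p : Polynomial ℂ | ∃ j : ℕ, j < n ∧ j % r = (k : ℕ) ∧ p = Polynomial.X ^ j}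

/-- The operator `c` on `ℂ_{n-1}[z]` with `c · z^k = ζ^{n-1-2k} z^k`, `ζ = e^{πi/r}`. -/
def cMap (n r : ℕ) : Polynomial ℂ →ₗ[ℂ] Polynomial ℂ :=
  (Complex.exp ((Real.pi : ℂ) * Complex.I / (r : ℂ))) ^ (n - 1) •
    (Polynomial.aeval
        (Polynomial.C (((Complex.exp ((Real.pi : ℂ) * Complex.I / (r : ℂ))) ^ 2)⁻¹) *
          Polynomial.X) :
      Polynomial ℂ →ₐ[ℂ] Polynomial ℂ).toLinearMap

/-- `μ` is obtained from `λ` by removing a single `r`-ribbon. -/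
def RibbonStep {d w : ℕ} (r : ℕ) (lam mu : PartitionIn d w) : Prop :=
  SubPartition mu lam ∧ IsRibbon r {p : ℕ × ℕ | InShape lam mu p.1 p.2}

/-- `λ` and `μ` have the same `r`-core: they are related by the equivalence
relation generated by removal of a single `r`-ribbon. -/
def RibbonEquiv {d w : ℕ} (r : ℕ) (lam mu : PartitionIn d w) : Prop :=
  Relation.EqvGen (fun a b => RibbonStep r a b) lam mu

/-- `κ` is an `r`-core: no `r`-ribbon can be removed from it. -/
def IsRCore {d w : ℕ} (r : ℕ) (kappa : PartitionIn d w) : Prop :=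
  ¬ ∃ mu : PartitionIn d w, RibbonStep r kappa mu

/-- The column set `J(λ) = {i - 1 + λ^{d+1-i} : 1 ≤ i ≤ d}` of the Plücker
coordinate `p_λ`, as a function of `i`. -/
def pluckerIndex {d w : ℕ} (lam : PartitionIn d w) (i : Fin d) : ℕ :=
  (i : ℕ) + lam.part (d - 1 - (i : ℕ))

/-- The Plücker coordinate `p_λ(x)` of `x` is nonzero (this does not depend on
the choice of basis of `x`). -/
def PluckerNonzero (d : ℕ) {w : ℕ} (lam : PartitionIn d w)
    (x : Submodule ℂ (Polynomial ℂ)) : Prop :=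
  ∃ f : Fin d → Polynomial ℂ, LinearIndependent ℂ f ∧
    Submodule.span ℂ (Set.range f) = x ∧
    Matrix.det (Matrix.of fun i i' : Fin d => (f i).coeff (pluckerIndex lam i')) ≠ 0

end




open Finset

namespace S17

variable {d w : ℕ}

theorem PartitionIn.ext' {lam mu : PartitionIn d w} (h : ∀ i, lam.part i = mu.part i) :
    lam = mu := by
  obtain ⟨p, a1, a2, a3⟩ := lam
  obtain ⟨q, b1, b2, b3⟩ := mu
  obtain rfl : p = q := funext h
  rfl

/-- Row beta: `λ_i + (d-1-i)`. -/
def rb (lam : PartitionIn d w) (i : ℕ) : ℕ := lam.part i + (d - 1 - i)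

theorem rb_lt_rb (lam : PartitionIn d w) {i j : ℕ} (hij : i < j) (hj : j < d) :
    rb lam j < rb lam i := by
  have := lam.antitone (le_of_lt hij)
  simp only [rb]; omega

theorem rb_le_rb (lam : PartitionIn d w) {i j : ℕ} (hij : i ≤ j) (hj : j < d) :
    rb lam j ≤ rb lam i := by
  rcases eq_or_lt_of_le hij with rfl | h
  · exact le_rfl
  · exact le_of_lt (rb_lt_rb lam h hj)

theorem rb_lt_bound (lam : PartitionIn d w) {i : ℕ} (hi : i < d) : rb lam i < d + w := by
  have := lam.le_w i
  simp only [rb]; omega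

theorem rb_injOn (lam : PartitionIn d w) {i j : ℕ} (hi : i < d) (hj : j < d)
    (h : rb lam i = rb lam j) : i = j := by
  rcases lt_trichotomy i j with hlt | rfl | hlt
  · exact absurd h (by have := rb_lt_rb lam hlt hj; omega)
  · rfl
  · exact absurd h (by have := rb_lt_rb lam hlt hi; omega)

theorem pluckerIndex_eq_rb (lam : PartitionIn d w) (k : Fin d) :
    pluckerIndex lam k = rb lam (d - 1 - (k : ℕ)) := by
  have hk := k.isLt
  simp only [pluckerIndex, rb]
  have h1 : d - 1 - (d - 1 - (k : ℕ)) = (k : ℕ) := by omega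
  rw [h1]
  omega

theorem pluckerIndex_strictMono (lam : PartitionIn d w) : StrictMono (pluckerIndex lam) := by
  intro i j hij
  have hij' : (i : ℕ) < (j : ℕ) := hij
  have hj := j.isLt
  have h1 : lam.part (d - 1 - (i : ℕ)) ≤ lam.part (d - 1 - (j : ℕ)) :=
    lam.antitone (by omega)
  simp only [pluckerIndex]
  omega

theorem pluckerIndex_lt (lam : PartitionIn d w) (k : Fin d) : pluckerIndex lam k < d + w := by
  rw [pluckerIndex_eq_rb]
  exact rb_lt_bound lam (by have := k.isLt; omega)

/-- The beta set of a partition. -/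
def betaSet (lam : PartitionIn d w) : Finset ℕ := (Finset.range d).image (rb lam)

theorem mem_betaSet {lam : PartitionIn d w} {c : ℕ} :
    c ∈ betaSet lam ↔ ∃ i, i < d ∧ rb lam i = c := by
  simp [betaSet]

theorem betaSet_eq_image (lam : PartitionIn d w) :
    betaSet lam = Finset.image (fun k : Fin d => pluckerIndex lam k) Finset.univ := by
  ext c
  simp only [mem_betaSet, Finset.mem_image, Finset.mem_univ, true_and]
  constructor
  · rintro ⟨i, hi, rfl⟩
    refine ⟨⟨d - 1 - i, by omega⟩, ?_⟩
    rw [pluckerIndex_eq_rb]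
    congr 1
    simp only [Fin.val_mk]
    omega
  · rintro ⟨k, rfl⟩
    exact ⟨d - 1 - (k : ℕ), by have := k.isLt; omega, (pluckerIndex_eq_rb _ _).symm⟩

theorem card_betaSet (lam : PartitionIn d w) : (betaSet lam).card = d := by
  rw [betaSet_eq_image,
    Finset.card_image_of_injective _ (pluckerIndex_strictMono lam).injective,
    Finset.card_univ, Fintype.card_fin]

theorem betaSet_lt {lam : PartitionIn d w} {c : ℕ} (h : c ∈ betaSet lam) : c < d + w := by
  rw [mem_betaSet] at h
  obtain ⟨i, hi, rfl⟩ := h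
  exact rb_lt_bound lam hi

theorem pluckerIndex_eq_orderEmbOfFin (lam : PartitionIn d w) :
    pluckerIndex lam = ⇑((betaSet lam).orderEmbOfFin (card_betaSet lam)) :=
  Finset.orderEmbOfFin_unique (card_betaSet lam)
    (fun k => by rw [betaSet_eq_image]; exact Finset.mem_image_of_mem _ (Finset.mem_univ k))
    (pluckerIndex_strictMono lam)

theorem betaSet_inj {lam mu : PartitionIn d w} (h : betaSet lam = betaSet mu) : lam = mu := by
  have h1 : pluckerIndex lam = pluckerIndex mu := by
    have h2 : pluckerIndex lam = ⇑((betaSet mu).orderEmbOfFin (card_betaSet mu)) :=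
      Finset.orderEmbOfFin_unique (card_betaSet mu)
        (fun k => by
          rw [← h, betaSet_eq_image]
          exact Finset.mem_image_of_mem _ (Finset.mem_univ k))
        (pluckerIndex_strictMono lam)
    rw [h2, pluckerIndex_eq_orderEmbOfFin mu]
  apply PartitionIn.ext'
  intro i
  by_cases hi : i < d
  · have hk : d - 1 - i < d := by omega
    have := congrFun h1 ⟨d - 1 - i, hk⟩
    simp only [pluckerIndex] at this
    have h2 : d - 1 - (d - 1 - i) = i := by omega
    rw [h2] at this
    omega
  · rw [lam.eq_zero i (by omega), mu.eq_zero i (by omega)]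

theorem strictMono_gap {δ : Fin d → ℕ} (hm : StrictMono δ) :
    ∀ t (k l : Fin d), (l : ℕ) = (k : ℕ) + t → δ k + t ≤ δ l := by
  intro t
  induction t with
  | zero =>
    intro k l h
    have : k = l := Fin.ext (by omega)
    subst this; omega
  | succ t ih =>
    intro k l h
    have hkt : (k : ℕ) + t < d := by have := l.isLt; omega
    have h1 := ih k ⟨(k : ℕ) + t, hkt⟩ rfl
    have h2 : (⟨(k : ℕ) + t, hkt⟩ : Fin d) < l := by
      rw [Fin.lt_def]; simp; omega
    have := hm h2
    omega

/-- Build a partition from a strictly monotone tuple of beta values. -/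
def partitionOfFun (δ : Fin d → ℕ) (hm : StrictMono δ) (hb : ∀ k, δ k < d + w) :
    PartitionIn d w where
  part i := if h : i < d then δ ⟨d - 1 - i, by omega⟩ - (d - 1 - i) else 0
  antitone := by
    intro i j hij
    by_cases hj : j < d
    · have hi : i < d := by omega
      rw [dif_pos hi, dif_pos hj]
      have := strictMono_gap hm (j - i) ⟨d - 1 - j, by omega⟩ ⟨d - 1 - i, by omega⟩ (by simp; omega)
      omega
    · rw [dif_neg hj]
      exact Nat.zero_le _
  le_w := by
    intro i
    by_cases hi : i < d
    · rw [dif_pos hi]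
      have h1 := strictMono_gap hm i ⟨d - 1 - i, by omega⟩ ⟨d - 1, by omega⟩ (by simp; omega)
      have h2 := hb ⟨d - 1, by omega⟩
      omega
    · rw [dif_neg hi]; exact Nat.zero_le _
  eq_zero := by
    intro i hi
    rw [dif_neg (by omega)]

theorem pluckerIndex_partitionOfFun (δ : Fin d → ℕ) (hm : StrictMono δ) (hb : ∀ k, δ k < d + w)
    (k : Fin d) : pluckerIndex (partitionOfFun δ hm hb) k = δ k := by
  have hk := k.isLt
  have h0 : 0 < d := k.pos
  simp only [pluckerIndex, partitionOfFun]
  rw [dif_pos (show d - 1 - (k : ℕ) < d by omega)]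
  have hidx : (⟨d - 1 - (d - 1 - (k : ℕ)), by omega⟩ : Fin d) = k := Fin.ext (by simp; omega)
  rw [hidx]
  have h1 := strictMono_gap hm (k : ℕ) ⟨0, h0⟩ k (by simp)
  omega

theorem betaSet_partitionOfFun (δ : Fin d → ℕ) (hm : StrictMono δ) (hb : ∀ k, δ k < d + w) :
    betaSet (partitionOfFun δ hm hb) = Finset.image (fun k : Fin d => δ k) Finset.univ := by
  rw [betaSet_eq_image]
  apply Finset.image_congr
  intro k _
  exact pluckerIndex_partitionOfFun δ hm hb k

end S17



open Finset

namespace S17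

variable {d w : ℕ}

/-- Parts-level description of removing an `r`-ribbon spanning rows `a..b`. -/
def PartsStep (r : ℕ) (lam mu : PartitionIn d w) : Prop :=
  ∃ a b, a ≤ b ∧ b < d ∧
    (∀ i, i < a ∨ b < i → mu.part i = lam.part i) ∧
    (∀ i, a ≤ i → i < b → mu.part i + 1 = lam.part (i + 1)) ∧
    mu.part b < lam.part b ∧
    rb lam a = rb mu b + r

theorem boxAdj_symm {p q : ℕ × ℕ} (h : BoxAdj p q) : BoxAdj q p := by
  unfold BoxAdj at *; tauto

theorem partsStep_sub {r : ℕ} {lam mu : PartitionIn d w} (h : PartsStep r lam mu) :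
    SubPartition mu lam := by
  obtain ⟨a, b, hab, hbd, hout, hmid, hb, -⟩ := h
  intro i
  rcases lt_or_ge i a with hi | hi
  · rw [hout i (Or.inl hi)]
  rcases lt_or_ge b i with hi' | hi'
  · rw [hout i (Or.inr hi')]
  rcases lt_or_eq_of_le hi' with hi'' | rfl
  · have h1 := hmid i hi hi''
    have h2 := lam.antitone (show i ≤ i + 1 by omega)
    omega
  · omega

/-- In a `PartsStep` situation, every row between `a` and `b` is nonempty. -/
theorem partsStep_row_nonempty {lam mu : PartitionIn d w}
    {a b : ℕ} (hab : a ≤ b)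
    (hmid : ∀ i, a ≤ i → i < b → mu.part i + 1 = lam.part (i + 1))
    (hb : mu.part b < lam.part b) :
    ∀ i, a ≤ i → i ≤ b → mu.part i < lam.part i := by
  intro i h1 h2
  rcases lt_or_eq_of_le h2 with h3 | rfl
  · have h4 := hmid i h1 h3
    have h5 := lam.antitone (show i ≤ i + 1 by omega)
    omega
  · exact hb

theorem telescope_sum {lam mu : PartitionIn d w} {b : ℕ} (hbd : b < d)
    (hb : mu.part b < lam.part b) :
    ∀ t a', a' + t = b →
      (∀ i, a' ≤ i → i < b → mu.part i + 1 = lam.part (i + 1)) →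
      (∑ i ∈ Finset.Icc a' b, (lam.part i - mu.part i)) + rb mu b = rb lam a' := by
  intro t
  induction t with
  | zero =>
    intro a' ha' _
    have : a' = b := by omega
    subst this
    rw [Finset.Icc_self, Finset.sum_singleton]
    simp only [rb]; omega
  | succ t ih =>
    intro a' ha' hmid
    have hab : a' < b := by omega
    have hsplit : Finset.Icc a' b = insert a' (Finset.Icc (a' + 1) b) := by
      ext x; simp only [Finset.mem_Icc, Finset.mem_insert]; omega
    have hnotmem : a' ∉ Finset.Icc (a' + 1) b := by simp [Finset.mem_Icc]
    rw [hsplit, Finset.sum_insert hnotmem]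
    have hih := ih (a' + 1) (by omega) (fun i h1 h2 => hmid i (by omega) h2)
    have hrel := hmid a' le_rfl hab
    have hsub : mu.part a' < lam.part a' := by
      have := lam.antitone (show a' ≤ a' + 1 by omega)
      omega
    simp only [rb] at hih ⊢
    omega

/-- The skew shape as a finset. -/
def skewFinset (lam mu : PartitionIn d w) : Finset (ℕ × ℕ) :=
  (Finset.range d).biUnion (fun i => (Finset.Ico (mu.part i) (lam.part i)).image (fun j => (i, j)))

theorem mem_skewFinset {lam mu : PartitionIn d w} {p : ℕ × ℕ} :
    p ∈ skewFinset lam mu ↔ InShape lam mu p.1 p.2 := by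
  obtain ⟨i, j⟩ := p
  simp only [skewFinset, Finset.mem_biUnion, Finset.mem_range, Finset.mem_image,
    Finset.mem_Ico, InShape, Prod.mk.injEq]
  constructor
  · rintro ⟨i', hi', j', hj', rfl, rfl⟩
    exact ⟨hi', hj'⟩
  · rintro ⟨hi, hj⟩
    exact ⟨i, hi, j, hj, rfl, rfl⟩

theorem coe_skewFinset (lam mu : PartitionIn d w) :
    (↑(skewFinset lam mu) : Set (ℕ × ℕ)) = {p : ℕ × ℕ | InShape lam mu p.1 p.2} :=
  Set.ext fun p => by simp [mem_skewFinset]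

theorem card_skewFinset (lam mu : PartitionIn d w) :
    (skewFinset lam mu).card = ∑ i ∈ Finset.range d, (lam.part i - mu.part i) := by
  rw [skewFinset, Finset.card_biUnion]
  · apply Finset.sum_congr rfl
    intro i _
    rw [Finset.card_image_of_injective _ (fun a b h => by simpa using h), Nat.card_Ico]
  · intro i _ i' _ hij
    simp only [Finset.disjoint_left, Finset.mem_image, Finset.mem_Ico]
    rintro p ⟨j1, hj1, rfl⟩ ⟨j2, hj2, h⟩
    exact hij ((congrArg Prod.fst h).symm)

theorem ncard_inShape (lam mu : PartitionIn d w) :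
    {p : ℕ × ℕ | InShape lam mu p.1 p.2}.ncard =
      ∑ i ∈ Finset.range d, (lam.part i - mu.part i) := by
  rw [← coe_skewFinset, Set.ncard_coe_finset, card_skewFinset]

/-- A `PartsStep` produces a genuine `RibbonStep`. -/
theorem partsStep_ribbonStep {r : ℕ} {lam mu : PartitionIn d w}
    (h : PartsStep r lam mu) : RibbonStep r lam mu := by
  have hsubp := partsStep_sub h
  obtain ⟨a, b, hab, hbd, hout, hmid, hb, hrb⟩ := h
  have hrows := partsStep_row_nonempty hab hmid hb
  -- every box of the shape lies in rows `a..b`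
  have hin : ∀ i j, InShape lam mu i j → a ≤ i ∧ i ≤ b := by
    intro i j ⟨hid, h1, h2⟩
    by_contra hcon
    have : i < a ∨ b < i := by omega
    have := hout i this
    omega
  refine ⟨hsubp, ?_, ?_, ?_⟩
  · -- cardinality
    rw [ncard_inShape]
    have hzero : ∀ i ∈ Finset.range d, i ∉ Finset.Icc a b → lam.part i - mu.part i = 0 := by
      intro i _ hi
      simp only [Finset.mem_Icc] at hi
      have := hout i (by omega)
      omega
    have hsubs : Finset.Icc a b ⊆ Finset.range d := by
      intro i hi
      simp only [Finset.mem_Icc] at hi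
      simp only [Finset.mem_range]
      omega
    rw [← Finset.sum_subset hsubs hzero]
    have := telescope_sum hbd hb (b - a) a (by omega) hmid
    omega
  · -- connectivity
    intro p hp q hq
    set S : Set (ℕ × ℕ) := {p : ℕ × ℕ | InShape lam mu p.1 p.2} with hS
    set Rel : ℕ × ℕ → ℕ × ℕ → Prop := fun u v => u ∈ S ∧ v ∈ S ∧ BoxAdj u v with hRel
    have hsymm : Symmetric Rel := fun u v ⟨h1, h2, h3⟩ => ⟨h2, h1, boxAdj_symm h3⟩
    have key : ∀ m (p : ℕ × ℕ), p ∈ S → p.2 + (b - p.1) ≤ m →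
        Relation.ReflTransGen Rel p (b, mu.part b) := by
      intro m
      induction m with
      | zero =>
        intro p hp hm
        obtain ⟨i, j⟩ := p
        have hsh : InShape lam mu i j := hp
        obtain ⟨hid, h1, h2⟩ := hsh
        have hr := hin i j hp
        have h3 : i = b := by omega
        rw [h3] at h1
        have hpe : ((i, j) : ℕ × ℕ) = (b, mu.part b) := by rw [h3]; congr 1; omega
        rw [hpe]
      | succ m ih =>
        intro p hp hm
        obtain ⟨i, j⟩ := p
        have hsh : InShape lam mu i j := hp
        obtain ⟨hid, h1, h2⟩ := hsh
        have hr := hin i j hp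
        rcases lt_or_eq_of_le h1 with hgt | heq
        · -- move left
          have hq : InShape lam mu i (j - 1) := ⟨hid, by omega, by omega⟩
          have hadj : BoxAdj (i, j) (i, j - 1) := Or.inl ⟨rfl, Or.inr (by simp; omega)⟩
          exact Relation.ReflTransGen.head ⟨hp, hq, hadj⟩ (ih (i, j - 1) hq (by simp; omega))
        · -- j = mu_i
          rcases lt_or_eq_of_le hr.2 with hib | rfl
          · have hlam : mu.part i + 1 = lam.part (i + 1) := hmid i hr.1 hib
            have hq : InShape lam mu (i + 1) j := by
              refine ⟨by omega, ?_, by omega⟩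
              have := mu.antitone (show i ≤ i + 1 by omega)
              omega
            have hadj : BoxAdj (i, j) (i + 1, j) := Or.inr ⟨rfl, Or.inl rfl⟩
            exact Relation.ReflTransGen.head ⟨hp, hq, hadj⟩ (ih (i + 1, j) hq (by simp; omega))
          · rw [heq]
    exact Relation.ReflTransGen.trans (key _ p hp le_rfl)
      (by haveI : Std.Symm Rel := ⟨fun u v h => hsymm h⟩; exact Std.Symm.symm _ _ (key _ q hq le_rfl))
  · -- no 2x2
    rintro ⟨i, j, h1, h2, h3, h4⟩
    simp only [Set.mem_setOf_eq] at h1 h2 h3 h4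
    have hr1 := hin _ _ h1
    have hr2 := hin _ _ h2
    have hib : i < b := by omega
    have hlam := hmid i hr1.1 hib
    obtain ⟨-, -, h2'⟩ := h2
    obtain ⟨-, h1', -⟩ := h1
    obtain ⟨-, -, h4'⟩ := h4
    omega

end S17



open Finset

namespace S17

variable {d w : ℕ}

theorem chain_row {S : Set (ℕ × ℕ)} {p q : ℕ × ℕ}
    (h : Relation.ReflTransGen (fun u v => u ∈ S ∧ v ∈ S ∧ BoxAdj u v) p q)
    (hp : p ∈ S) : ∀ i, p.1 ≤ i → i ≤ q.1 → ∃ j, (i, j) ∈ S := by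
  induction h with
  | refl =>
    intro i h1 h2
    have : i = p.1 := le_antisymm h2 h1
    subst this
    exact ⟨p.2, hp⟩
  | @tail q' qf hchain hstep ih =>
    intro i h1 h2
    obtain ⟨hq1, hq2, hadj⟩ := hstep
    rcases le_or_gt i q'.1 with hle | hgt
    · exact ih i h1 hle
    · rcases hadj with ⟨hrow, -⟩ | ⟨-, hc | hc⟩
      · omega
      · have hi : i = qf.1 := by omega
        subst hi
        exact ⟨qf.2, hq2⟩
      · omega

theorem chain_cross {S : Set (ℕ × ℕ)} {p q : ℕ × ℕ}
    (h : Relation.ReflTransGen (fun u v => u ∈ S ∧ v ∈ S ∧ BoxAdj u v) p q) :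
    ∀ i, p.1 ≤ i → i < q.1 → ∃ j, (i, j) ∈ S ∧ (i + 1, j) ∈ S := by
  induction h with
  | refl => intro i h1 h2; omega
  | @tail q' qf hchain hstep ih =>
    intro i h1 h2
    obtain ⟨hq1, hq2, hadj⟩ := hstep
    rcases lt_or_ge i q'.1 with hlt | hge
    · exact ih i h1 hlt
    · rcases hadj with ⟨hrow, -⟩ | ⟨hcol, hc | hc⟩
      · omega
      · have hi : i = q'.1 := by omega
        subst hi
        refine ⟨q'.2, hq1, ?_⟩
        have heq : ((q'.1 + 1 : ℕ), q'.2) = qf := by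
          rw [Prod.ext_iff]
          constructor
          · simpa using hc
          · simpa using hcol
        rw [heq]
        exact hq2
      · omega

/-- Every `RibbonStep` arises from a `PartsStep`. -/
theorem ribbonStep_partsStep {r : ℕ} {lam mu : PartitionIn d w}
    (h : RibbonStep r lam mu) (hr : 1 ≤ r) : PartsStep r lam mu := by
  obtain ⟨hsub, hcard, hconn, h2x2⟩ := h
  set S : Set (ℕ × ℕ) := {p : ℕ × ℕ | InShape lam mu p.1 p.2} with hS
  have hmemS : ∀ u v : ℕ, (((u, v) : ℕ × ℕ) ∈ S) ↔ (u < d ∧ mu.part u ≤ v ∧ v < lam.part u) :=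
    fun u v => Iff.rfl
  have hSne : S.Nonempty := by
    apply Set.nonempty_of_ncard_ne_zero
    rw [hcard]; omega
  obtain ⟨p₀, hp₀⟩ := hSne
  have hp₀' : InShape lam mu p₀.1 p₀.2 := hp₀
  have hPd : ∀ i, mu.part i < lam.part i → i < d := by
    intro i hi
    by_contra hcon
    rw [lam.eq_zero i (by omega), mu.eq_zero i (by omega)] at hi
    omega
  have hProw : mu.part p₀.1 < lam.part p₀.1 := by obtain ⟨-, h1, h2⟩ := hp₀'; omega
  have hex : ∃ i, mu.part i < lam.part i := ⟨p₀.1, hProw⟩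
  classical
  set a := Nat.find hex with ha
  set b := Nat.findGreatest (fun i => mu.part i < lam.part i) d with hbdef
  have hPa : mu.part a < lam.part a := Nat.find_spec hex
  have hp1d : p₀.1 ≤ d := le_of_lt (hPd _ hProw)
  have hPb' : p₀.1 ≤ b := Nat.le_findGreatest hp1d hProw
  have hab : a ≤ b := le_trans (Nat.find_min' hex hProw) hPb'
  have hPb : mu.part b < lam.part b := by
    have := Nat.findGreatest_spec (P := fun i => mu.part i < lam.part i) hp1d hProw
    rwa [← hbdef] at this
  have hbd : b < d := hPd b hPb
  have hout : ∀ i, i < a ∨ b < i → mu.part i = lam.part i := by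
    intro i hi
    have hle := hsub i
    rcases hi with hi | hi
    · have := Nat.find_min hex hi
      omega
    · rcases le_or_gt i d with hid | hid
      · rw [hbdef] at hi
        have := Nat.findGreatest_is_greatest (P := fun i => mu.part i < lam.part i) hi hid
        omega
      · rw [lam.eq_zero i (by omega), mu.eq_zero i (by omega)]
  -- all rows between a and b are nonempty
  have hall : ∀ i, a ≤ i → i ≤ b → mu.part i < lam.part i := by
    intro i h1 h2
    have hboxa : ((a, mu.part a) : ℕ × ℕ) ∈ S := (hmemS _ _).mpr ⟨hPd a hPa, le_rfl, hPa⟩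
    have hboxb : ((b, mu.part b) : ℕ × ℕ) ∈ S := (hmemS _ _).mpr ⟨hbd, le_rfl, hPb⟩
    have hchain := hconn _ hboxa _ hboxb
    obtain ⟨j, hj⟩ := chain_row hchain hboxa i h1 h2
    have := (hmemS _ _).mp hj
    omega
  -- the middle rows relation
  have hmid : ∀ i, a ≤ i → i < b → mu.part i + 1 = lam.part (i + 1) := by
    intro i h1 h2
    have hi1 : mu.part i < lam.part i := hall i h1 (by omega)
    have hi2 : mu.part (i + 1) < lam.part (i + 1) := hall (i + 1) (by omega) (by omega)
    have hcross : mu.part i < lam.part (i + 1) := by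
      have hboxi : ((i, mu.part i) : ℕ × ℕ) ∈ S := (hmemS _ _).mpr ⟨by omega, le_rfl, hi1⟩
      have hboxi1 : ((i + 1, mu.part (i + 1)) : ℕ × ℕ) ∈ S :=
        (hmemS _ _).mpr ⟨by omega, le_rfl, hi2⟩
      have hchain := hconn _ hboxi _ hboxi1
      obtain ⟨j, hj1, hj2⟩ := chain_cross hchain i le_rfl (by simp)
      have ha1 := (hmemS _ _).mp hj1
      have ha2 := (hmemS _ _).mp hj2
      omega
    by_contra hcon
    have h2le : mu.part i + 2 ≤ lam.part (i + 1) := by omega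
    apply h2x2
    have hmono := lam.antitone (show i ≤ i + 1 by omega)
    have hmono' := mu.antitone (show i ≤ i + 1 by omega)
    exact ⟨i, mu.part i,
      (hmemS _ _).mpr ⟨by omega, le_rfl, by omega⟩,
      (hmemS _ _).mpr ⟨by omega, by omega, by omega⟩,
      (hmemS _ _).mpr ⟨by omega, by omega, by omega⟩,
      (hmemS _ _).mpr ⟨by omega, by omega, by omega⟩⟩
  refine ⟨a, b, hab, hbd, hout, hmid, hPb, ?_⟩
  have htel := telescope_sum hbd hPb (b - a) a (by omega) hmid
  have hzero : ∀ i ∈ Finset.range d, i ∉ Finset.Icc a b → lam.part i - mu.part i = 0 := by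
    intro i _ hi
    simp only [Finset.mem_Icc] at hi
    have := hout i (by omega)
    omega
  have hsubs : Finset.Icc a b ⊆ Finset.range d := by
    intro i hi
    simp only [Finset.mem_Icc] at hi
    simp only [Finset.mem_range]
    omega
  have hc2 := ncard_inShape lam mu
  rw [← Finset.sum_subset hsubs hzero] at hc2
  rw [← hS, hcard] at hc2
  omega

/-- Beta-set description of a `PartsStep`. -/
theorem partsStep_beta {r : ℕ} {lam mu : PartitionIn d w} (h : PartsStep r lam mu) :
    ∃ c, c ∈ betaSet lam ∧ r ≤ c ∧ c - r ∉ betaSet lam ∧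
      betaSet mu = insert (c - r) ((betaSet lam).erase c) := by
  obtain ⟨a, b, hab, hbd, hout, hmid, hb, hrb⟩ := h
  have had : a < d := by omega
  refine ⟨rb lam a, mem_betaSet.mpr ⟨a, had, rfl⟩, by omega, ?_, ?_⟩
  · -- c - r ∉ betaSet lam
    rw [mem_betaSet]
    rintro ⟨i, hid, hi⟩
    have hcr : rb lam a - r = rb mu b := by omega
    rw [hcr] at hi
    rcases le_or_gt i b with hib | hib
    · have h1 : rb lam b ≤ rb lam i := rb_le_rb lam hib hbd
      have h2 : rb mu b < rb lam b := by simp only [rb]; omega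
      omega
    · have hb1d : b + 1 < d := by omega
      have h1 : rb lam i ≤ rb lam (b + 1) := rb_le_rb lam hib hid
      have h2 : rb lam (b + 1) < rb mu b := by
        have he : mu.part (b + 1) = lam.part (b + 1) := hout _ (by omega)
        have hm := mu.antitone (show b ≤ b + 1 by omega)
        simp only [rb]; omega
      omega
  · -- set equality
    ext c'
    have hcr : rb lam a - r = rb mu b := by omega
    simp only [Finset.mem_insert, Finset.mem_erase, mem_betaSet]
    constructor
    · rintro ⟨i, hid, rfl⟩
      rcases le_or_gt a i with h1 | h1
      · rcases le_or_gt i b with h2 | h2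
        · rcases lt_or_eq_of_le h2 with h3 | rfl
          · -- middle rows: rb mu i = rb lam (i+1)
            right
            have hrel := hmid i h1 h3
            have : rb mu i = rb lam (i + 1) := by simp only [rb]; omega
            rw [this]
            refine ⟨?_, ⟨i + 1, by omega, rfl⟩⟩
            intro heq
            have := rb_injOn lam (by omega) had heq
            omega
          · left; omega
        · right
          have he : mu.part i = lam.part i := hout i (by omega)
          have : rb mu i = rb lam i := by simp only [rb]; omega
          rw [this]
          refine ⟨?_, ⟨i, hid, rfl⟩⟩
          intro heq
          have := rb_injOn lam hid had heq
          omega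
      · right
        have he : mu.part i = lam.part i := hout i (by omega)
        have : rb mu i = rb lam i := by simp only [rb]; omega
        rw [this]
        refine ⟨?_, ⟨i, hid, rfl⟩⟩
        intro heq
        have := rb_injOn lam hid had heq
        omega
    · rintro (rfl | ⟨hne, i, hid, rfl⟩)
      · exact ⟨b, hbd, by omega⟩
      · have hia : i ≠ a := fun hia => hne (by rw [hia])
        rcases lt_or_ge i a with h1 | h1
        · exact ⟨i, hid, by have := hout i (Or.inl h1); simp only [rb]; omega⟩
        rcases le_or_gt i b with h2 | h2
        · -- a < i ≤ b : rb lam i = rb mu (i-1)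
          have hai : a < i := by omega
          have hrel := hmid (i - 1) (by omega) (by omega)
          refine ⟨i - 1, by omega, ?_⟩
          have : i - 1 + 1 = i := by omega
          rw [this] at hrel
          simp only [rb]
          omega
        · exact ⟨i, hid, by have := hout i (Or.inr h2); simp only [rb]; omega⟩

/-- A ribbon step strictly decreases the size. -/
theorem partsStep_size_lt {r : ℕ} {lam mu : PartitionIn d w} (h : PartsStep r lam mu) :
    mu.size < lam.size := by
  have hsub := partsStep_sub h
  obtain ⟨a, b, hab, hbd, hout, hmid, hb, hrb⟩ := h
  apply Finset.sum_lt_sum (fun i _ => hsub i)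
  exact ⟨b, Finset.mem_range.mpr hbd, hb⟩

/-- Construct a ribbon step from a beta step. -/
theorem exists_partsStep_of_beta {r : ℕ} (hr : 1 ≤ r) {lam : PartitionIn d w} {c : ℕ}
    (hc : c ∈ betaSet lam) (hcr : r ≤ c) (hnotin : c - r ∉ betaSet lam) :
    ∃ mu : PartitionIn d w, PartsStep r lam mu := by
  obtain ⟨a, had, hrba⟩ := mem_betaSet.mp hc
  have hd0 : 0 < d := by omega
  classical
  set b := Nat.findGreatest (fun i => c - r < rb lam i) (d - 1) with hbdef
  have hPa : c - r < rb lam a := by omega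
  have hab : a ≤ b := Nat.le_findGreatest (by omega) hPa
  have hbd1 : b ≤ d - 1 := Nat.findGreatest_le _
  have hbd : b < d := by omega
  have hPb : c - r < rb lam b := by
    have := Nat.findGreatest_spec (P := fun i => c - r < rb lam i) (n := d - 1)
      (show a ≤ d - 1 by omega) hPa
    rwa [← hbdef] at this
  have hbp1 : b + 1 < d → rb lam (b + 1) < c - r := by
    intro h1
    have hblt : Nat.findGreatest (fun i => c - r < rb lam i) (d - 1) < b + 1 := by omega
    have h2 := Nat.findGreatest_is_greatest (P := fun i => c - r < rb lam i) (n := d - 1)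
      hblt (show b + 1 ≤ d - 1 by omega)
    have h3 : rb lam (b + 1) ≠ c - r := by
      intro heq
      exact hnotin (mem_betaSet.mpr ⟨b + 1, h1, heq⟩)
    omega
  -- positivity of parts in rows ≤ b
  have hlampos : ∀ j, j ≤ b → 1 ≤ lam.part j := by
    intro j hj
    by_contra hcon
    have hz : lam.part j = 0 := by omega
    have hjd : j < d := by omega
    have h1 : c - r < rb lam j := by
      have := rb_le_rb lam hj hbd
      omega
    rw [rb, hz] at h1
    have hkd : d - 1 - (c - r) < d := by omega
    apply hnotin
    apply mem_betaSet.mpr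
    refine ⟨d - 1 - (c - r), hkd, ?_⟩
    have hjk : j ≤ d - 1 - (c - r) := by omega
    have hzk : lam.part (d - 1 - (c - r)) = 0 := by
      have := lam.antitone hjk
      omega
    rw [rb, hzk]
    omega
  have hmub : d - 1 - b ≤ c - r := by
    rcases lt_or_ge (b + 1) d with h1 | h1
    · have := hbp1 h1
      rw [rb] at this
      omega
    · omega
  set f : ℕ → ℕ := fun i =>
    if i < a ∨ b < i then lam.part i
    else if i < b then lam.part (i + 1) - 1
    else c - r - (d - 1 - b) with hf
  have hfout : ∀ i, i < a ∨ b < i → f i = lam.part i := by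
    intro i hi; rw [hf]; simp only; rw [if_pos hi]
  have hfmid : ∀ i, a ≤ i → i < b → f i = lam.part (i + 1) - 1 := by
    intro i h1 h2; rw [hf]; simp only
    rw [if_neg (by omega), if_pos h2]
  have hfb : f b = c - r - (d - 1 - b) := by
    rw [hf]; simp only
    rw [if_neg (by omega), if_neg (by omega)]
  have hrba' : lam.part a + (d - 1 - a) = c := by rw [rb] at hrba; omega
  have hPb' : c - r < lam.part b + (d - 1 - b) := by rw [rb] at hPb; omega
  have hfsucc : ∀ i, f (i + 1) ≤ f i := by
    intro i
    rcases lt_or_ge (i + 1) a with h1 | h1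
    · rw [hfout i (Or.inl (by omega)), hfout (i + 1) (Or.inl h1)]
      exact lam.antitone (by omega)
    rcases lt_or_ge i a with h2 | h2
    · have ha1 : i + 1 = a := by omega
      rw [hfout i (Or.inl h2), ha1]
      rcases lt_or_eq_of_le hab with hab' | hab'
      · rw [hfmid a le_rfl hab']
        have hm1 := lam.antitone (show a ≤ a + 1 by omega)
        have hm2 := lam.antitone (show i ≤ a by omega)
        omega
      · rw [hab', hfb]
        have hm2 := lam.antitone (show i ≤ a by omega)
        omega
    rcases lt_or_ge (i + 1) b with h3 | h3
    · rw [hfmid i h2 (by omega), hfmid (i + 1) (by omega) h3]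
      have := lam.antitone (show i + 1 ≤ i + 1 + 1 by omega)
      omega
    rcases lt_or_ge i b with h4 | h4
    · have hb1 : i + 1 = b := by omega
      rw [hfmid i h2 h4, hb1, hfb]
      have hp := hlampos b le_rfl
      omega
    rcases eq_or_lt_of_le h4 with hib | hib
    · rw [← hib, hfout (b + 1) (Or.inr (by omega)), hfb]
      rcases lt_or_ge (b + 1) d with hbd2 | hbd2
      · have := hbp1 hbd2
        rw [rb] at this
        omega
      · rw [lam.eq_zero (b + 1) (by omega)]
        omega
    · rw [hfout i (Or.inr hib), hfout (i + 1) (Or.inr (by omega))]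
      exact lam.antitone (by omega)
  have hfle : ∀ i, f i ≤ lam.part i := by
    intro i
    rcases lt_or_ge i a with h1 | h1
    · rw [hfout i (Or.inl h1)]
    rcases lt_or_ge i b with h2 | h2
    · rw [hfmid i h1 h2]
      have := lam.antitone (show i ≤ i + 1 by omega)
      omega
    rcases eq_or_lt_of_le h2 with hib | hib
    · rw [← hib, hfb]
      have hp := hlampos b le_rfl
      omega
    · rw [hfout i (Or.inr hib)]
  have hanti : Antitone f := antitone_nat_of_succ_le hfsucc
  refine ⟨⟨f, fun i j hij => hanti hij, fun i => (hfle i).trans (lam.le_w i),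
      fun i hi => by rw [hfout i (Or.inr (by omega))]; exact lam.eq_zero i hi⟩,
    a, b, hab, hbd, hfout, ?_, ?_, ?_⟩
  · intro i hai hib
    show f i + 1 = lam.part (i + 1)
    rw [hfmid i hai hib]
    have := hlampos (i + 1) (by omega)
    omega
  · show f b < lam.part b
    rw [hfb]
    have := hlampos b le_rfl
    omega
  · show rb lam a = rb _ b + r
    rw [rb, rb]
    show lam.part a + (d - 1 - a) = f b + (d - 1 - b) + r
    rw [hfb]
    omega

theorem exists_ribbonStep_of_beta {r : ℕ} (hr : 1 ≤ r) {lam : PartitionIn d w} {c : ℕ}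
    (hc : c ∈ betaSet lam) (hcr : r ≤ c) (hnotin : c - r ∉ betaSet lam) :
    ∃ mu : PartitionIn d w, RibbonStep r lam mu := by
  obtain ⟨mu, hmu⟩ := exists_partsStep_of_beta hr hc hcr hnotin
  exact ⟨mu, partsStep_ribbonStep hmu⟩

end S17



open Finset

namespace S17

variable {d w : ℕ}

def resCount (r : ℕ) (B : Finset ℕ) (t : ℕ) : ℕ := (B.filter fun c => c % r = t).card

theorem sub_mod_eq {r c : ℕ} (hcr : r ≤ c) : (c - r) % r = c % r := by
  conv_rhs => rw [show c = (c - r) + r by omega]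
  rw [Nat.add_mod_right]

theorem resCount_insert_erase {r : ℕ} {B : Finset ℕ} {c : ℕ}
    (hc : c ∈ B) (hcr : r ≤ c) (hnot : c - r ∉ B) (t : ℕ) :
    resCount r (insert (c - r) (B.erase c)) t = resCount r B t := by
  classical
  simp only [resCount, Finset.filter_insert, Finset.filter_erase]
  have hmod : (c - r) % r = c % r := sub_mod_eq hcr
  by_cases ht : c % r = t
  · rw [if_pos (by rw [hmod, ht])]
    have hcf : c ∈ B.filter fun x => x % r = t := Finset.mem_filter.mpr ⟨hc, ht⟩
    have hnotf : c - r ∉ (B.filter fun x => x % r = t).erase c :=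
      fun hmem => hnot (Finset.mem_filter.mp (Finset.mem_of_mem_erase hmem)).1
    rw [Finset.card_insert_of_notMem hnotf, Finset.card_erase_of_mem hcf]
    have : 1 ≤ (B.filter fun x => x % r = t).card := Finset.card_pos.mpr ⟨c, hcf⟩
    omega
  · rw [if_neg (by rw [hmod]; exact ht)]
    have hcnot : c ∉ B.filter (fun x => x % r = t) :=
      fun hmem => ht (Finset.mem_filter.mp hmem).2
    rw [Finset.erase_eq_of_notMem hcnot]

theorem ribbonStep_resCount {r : ℕ} (hr : 1 ≤ r) {lam mu : PartitionIn d w}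
    (h : RibbonStep r lam mu) (t : ℕ) :
    resCount r (betaSet mu) t = resCount r (betaSet lam) t := by
  obtain ⟨c, hc, hcr, hnot, hset⟩ := partsStep_beta (ribbonStep_partsStep h hr)
  rw [hset]
  exact resCount_insert_erase hc hcr hnot t

theorem ribbonEquiv_resCount {r : ℕ} (hr : 1 ≤ r) {lam mu : PartitionIn d w}
    (h : RibbonEquiv r lam mu) (t : ℕ) :
    resCount r (betaSet lam) t = resCount r (betaSet mu) t := by
  induction h with
  | rel a b hab => exact (ribbonStep_resCount hr hab t).symm
  | refl a => rfl
  | symm a b h ih => exact ih.symm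
  | trans a b c h1 h2 ih1 ih2 => exact ih1.trans ih2

def betaSum (lam : PartitionIn d w) : ℕ := (betaSet lam).sum id

theorem ribbonStep_betaSum {r : ℕ} (hr : 1 ≤ r) {lam mu : PartitionIn d w}
    (h : RibbonStep r lam mu) : betaSum mu + r = betaSum lam := by
  classical
  obtain ⟨c, hc, hcr, hnot, hset⟩ := partsStep_beta (ribbonStep_partsStep h hr)
  have h1 : betaSum mu = (c - r) + ((betaSet lam).erase c).sum id := by
    rw [betaSum, hset, Finset.sum_insert (fun hmem => hnot (Finset.mem_of_mem_erase hmem))]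
    rfl
  have h2 : c + ((betaSet lam).erase c).sum id = betaSum lam := Finset.add_sum_erase _ id hc
  omega

theorem ribbonEquiv_betaSum {r : ℕ} (hr : 1 ≤ r) {lam mu : PartitionIn d w}
    (h : RibbonEquiv r lam mu) : betaSum lam % r = betaSum mu % r := by
  induction h with
  | rel a b hab =>
    have := ribbonStep_betaSum hr hab
    rw [← this, Nat.add_mod_right]
  | refl a => rfl
  | symm a b h ih => exact ih.symm
  | trans a b c h1 h2 ih1 ih2 => exact ih1.trans ih2

/-- A minimal (core-like) beta set. -/
def MinSet (r : ℕ) (B : Finset ℕ) : Prop := ∀ c ∈ B, r ≤ c → c - r ∈ B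

theorem minSet_filter {r : ℕ} (hr : 1 ≤ r) {B : Finset ℕ} (hmin : MinSet r B) (t : ℕ) :
    B.filter (fun c => c % r = t) = (Finset.range (resCount r B t)).image (fun j => t + j * r) := by
  classical
  set F := B.filter (fun c => c % r = t) with hF
  rcases lt_or_ge t r with htr | htr
  · have hdown : ∀ c ∈ F, r ≤ c → c - r ∈ F := by
      intro c hcF hrc
      obtain ⟨hcB, hct⟩ := Finset.mem_filter.mp hcF
      exact Finset.mem_filter.mpr ⟨hmin c hcB hrc, by rw [sub_mod_eq hrc]; exact hct⟩
    have hchar : ∀ c ∈ F, c = t + (c / r) * r := by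
      intro c hcF
      obtain ⟨-, hct⟩ := Finset.mem_filter.mp hcF
      have := Nat.mod_add_div' c r
      omega
    have hchain : ∀ k, t + k * r ∈ F → ∀ j, j ≤ k → t + j * r ∈ F := by
      intro k
      induction k with
      | zero => intro h j hj; rw [Nat.le_zero.mp hj]; exact h
      | succ k ih =>
        intro h j hj
        rcases Nat.lt_or_ge j (k + 1) with hj' | hj'
        · apply ih _ j (by omega)
          have h1 := hdown _ h (by
            have h3 : (k + 1) * r = k * r + r := by ring
            omega)
          have h2 : t + (k + 1) * r - r = t + k * r := by
            have h3 : (k + 1) * r = k * r + r := by ring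
            omega
          rwa [h2] at h1
        · have : j = k + 1 := by omega
          rw [this]; exact h
    rcases Finset.eq_empty_or_nonempty F with hFe | hFne
    · rw [hFe]
      have : resCount r B t = 0 := by rw [resCount, ← hF, hFe]; rfl
      rw [this]
      simp
    · set M := F.max' hFne with hM
      have hMF : M ∈ F := F.max'_mem hFne
      have hMc := hchar M hMF
      set K := M / r with hK
      have hFeq : F = (Finset.range (K + 1)).image (fun j => t + j * r) := by
        apply Finset.Subset.antisymm
        · intro c hcF
          have hc := hchar c hcF
          have hcM : c ≤ M := F.le_max' c hcF
          apply Finset.mem_image.mpr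
          refine ⟨c / r, Finset.mem_range.mpr ?_, hc.symm⟩
          by_contra hcon
          have hKc : K + 1 ≤ c / r := by omega
          have : (K + 1) * r ≤ (c / r) * r := Nat.mul_le_mul_right r hKc
          have hKr : K * r + r ≤ c / r * r := by
            have : (K + 1) * r = K * r + r := by ring
            omega
          omega
        · intro x hx
          obtain ⟨j, hj, rfl⟩ := Finset.mem_image.mp hx
          rw [Finset.mem_range] at hj
          apply hchain K (by rw [← hMc]; exact hMF) j (by omega)
      have hcount : resCount r B t = K + 1 := by
        rw [resCount, ← hF, hFeq, Finset.card_image_of_injective _ ?_, Finset.card_range]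
        intro j1 j2 hj
        simp only at hj
        have : j1 * r = j2 * r := by omega
        exact Nat.eq_of_mul_eq_mul_right (by omega) this
      rw [hcount]
      exact hFeq
  · have hFe : F = ∅ := by
      rw [hF]
      apply Finset.filter_false_of_mem
      intro c _
      have := Nat.mod_lt c (show 0 < r by omega)
      omega
    have : resCount r B t = 0 := by rw [resCount, ← hF, hFe]; rfl
    rw [hFe, this]
    simp

theorem minSet_eq {r : ℕ} (hr : 1 ≤ r) {B B' : Finset ℕ} (h : MinSet r B) (h' : MinSet r B')
    (hcount : ∀ t, resCount r B t = resCount r B' t) : B = B' := by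
  classical
  ext c
  have h1 : c ∈ B ↔ c ∈ B.filter (fun x => x % r = c % r) := by
    simp [Finset.mem_filter]
  have h2 : c ∈ B' ↔ c ∈ B'.filter (fun x => x % r = c % r) := by
    simp [Finset.mem_filter]
  rw [h1, h2, minSet_filter hr h (c % r), minSet_filter hr h' (c % r), hcount (c % r)]

theorem reflTransGen_ribbonEquiv {r : ℕ} {lam nu : PartitionIn d w}
    (h : Relation.ReflTransGen (RibbonStep r) lam nu) : RibbonEquiv r lam nu := by
  induction h with
  | refl => exact Relation.EqvGen.refl _
  | tail hchain hstep ih =>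
    exact Relation.EqvGen.trans _ _ _ ih (Relation.EqvGen.rel _ _ hstep)

theorem reduce_to_min {r : ℕ} (hr : 1 ≤ r) (lam : PartitionIn d w) :
    ∃ nu : PartitionIn d w, MinSet r (betaSet nu) ∧
      Relation.ReflTransGen (RibbonStep r) lam nu := by
  classical
  have main : ∀ n (lam : PartitionIn d w), lam.size ≤ n →
      ∃ nu : PartitionIn d w, MinSet r (betaSet nu) ∧
        Relation.ReflTransGen (RibbonStep r) lam nu := by
    intro n
    induction n with
    | zero =>
      intro lam hsize
      by_cases h : MinSet r (betaSet lam)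
      · exact ⟨lam, h, Relation.ReflTransGen.refl⟩
      · unfold MinSet at h
        push_neg at h
        obtain ⟨c, hc, hcr, hnot⟩ := h
        obtain ⟨mu, hmu⟩ := exists_partsStep_of_beta hr hc hcr hnot
        have := partsStep_size_lt hmu
        omega
    | succ n ih =>
      intro lam hsize
      by_cases h : MinSet r (betaSet lam)
      · exact ⟨lam, h, Relation.ReflTransGen.refl⟩
      · unfold MinSet at h
        push_neg at h
        obtain ⟨c, hc, hcr, hnot⟩ := h
        obtain ⟨mu, hmu⟩ := exists_partsStep_of_beta hr hc hcr hnot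
        have hlt := partsStep_size_lt hmu
        obtain ⟨nu, hmin, hchain⟩ := ih mu (by omega)
        exact ⟨nu, hmin, Relation.ReflTransGen.head (partsStep_ribbonStep hmu) hchain⟩
  exact main lam.size lam le_rfl

theorem isRCore_iff_minSet {r : ℕ} (hr : 1 ≤ r) (kappa : PartitionIn d w) :
    IsRCore r kappa ↔ MinSet r (betaSet kappa) := by
  constructor
  · intro hcore
    by_contra hnm
    unfold MinSet at hnm
    push_neg at hnm
    obtain ⟨c, hc, hcr, hnot⟩ := hnm
    exact hcore (exists_ribbonStep_of_beta hr hc hcr hnot)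
  · rintro hmin ⟨mu, hstep⟩
    obtain ⟨c, hc, hcr, hnot, -⟩ := partsStep_beta (ribbonStep_partsStep hstep hr)
    exact hnot (hmin c hc hcr)

theorem resCount_eq_iff_ribbonEquiv {r : ℕ} (hr : 1 ≤ r) (lam mu : PartitionIn d w) :
    (∀ t, resCount r (betaSet lam) t = resCount r (betaSet mu) t) ↔ RibbonEquiv r lam mu := by
  constructor
  · intro hcount
    obtain ⟨nu1, hm1, hc1⟩ := reduce_to_min hr lam
    obtain ⟨nu2, hm2, hc2⟩ := reduce_to_min hr mu
    have he1 := ribbonEquiv_resCount hr (reflTransGen_ribbonEquiv hc1)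
    have he2 := ribbonEquiv_resCount hr (reflTransGen_ribbonEquiv hc2)
    have hnu : nu1 = nu2 := betaSet_inj (minSet_eq hr hm1 hm2
      (fun t => by rw [← he1 t, hcount t, he2 t]))
    subst hnu
    exact Relation.EqvGen.trans _ _ _ (reflTransGen_ribbonEquiv hc1)
      (Relation.EqvGen.symm _ _ (reflTransGen_ribbonEquiv hc2))
  · exact fun h t => ribbonEquiv_resCount hr h t

theorem exists_core_equiv {r : ℕ} (hr : 1 ≤ r) (lam : PartitionIn d w) :
    ∃ kappa : PartitionIn d w, IsRCore r kappa ∧ RibbonEquiv r lam kappa := by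
  obtain ⟨nu, hmin, hchain⟩ := reduce_to_min hr lam
  exact ⟨nu, (isRCore_iff_minSet hr nu).mpr hmin, reflTransGen_ribbonEquiv hchain⟩

theorem core_unique {r : ℕ} (hr : 1 ≤ r) {k1 k2 : PartitionIn d w}
    (h1 : IsRCore r k1) (h2 : IsRCore r k2) (h : RibbonEquiv r k1 k2) : k1 = k2 :=
  betaSet_inj (minSet_eq hr ((isRCore_iff_minSet hr k1).mp h1)
    ((isRCore_iff_minSet hr k2).mp h2) (fun t => ribbonEquiv_resCount hr h t))

end S17



open Polynomial Finset

namespace S17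

theorem rotMap_coeff (c : ℂ) (p : Polynomial ℂ) (k : ℕ) :
    (rotMap c p).coeff k = c ^ k * p.coeff k := by
  induction p using Polynomial.induction_on' with
  | add p q hp hq => simp [map_add, hp, hq, mul_add]
  | monomial n a =>
    simp only [rotMap, AlgHom.toLinearMap_apply, Polynomial.aeval_monomial, mul_pow,
      ← Polynomial.C_pow, Polynomial.algebraMap_eq]
    rw [← mul_assoc, ← Polynomial.C_mul]
    rw [Polynomial.coeff_C_mul, Polynomial.coeff_X_pow, Polynomial.coeff_monomial]
    by_cases h : n = k
    · subst h; simp [mul_comm]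
    · simp [h, Ne.symm h]

theorem rotMap_mul (a b : ℂ) : rotMap (a * b) = (rotMap a) ∘ₗ (rotMap b) := by
  apply LinearMap.ext
  intro p
  apply Polynomial.ext
  intro k
  simp [rotMap_coeff, mul_pow]
  ring

theorem pow_eq_pow_mod {u : ℂ} {r : ℕ} (hu : u ^ r = 1) (k : ℕ) : u ^ k = u ^ (k % r) := by
  conv_lhs => rw [← Nat.mod_add_div k r, pow_add, pow_mul, hu, one_pow, mul_one]

/-- The primitive `r`-th root of unity `e^{-2πi/r}`. -/
noncomputable def zeta (r : ℕ) : ℂ := Complex.exp (-(2 * (Real.pi : ℂ) * Complex.I) / r)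

theorem zeta_ne_zero (r : ℕ) : zeta r ≠ 0 := Complex.exp_ne_zero _

theorem zeta_eq_inv (r : ℕ) : zeta r = (Complex.exp (2 * (Real.pi : ℂ) * Complex.I / r))⁻¹ := by
  rw [zeta, ← Complex.exp_neg, neg_div]

theorem isPrimitiveRoot_zeta {r : ℕ} (hr : 1 ≤ r) : IsPrimitiveRoot (zeta r) r := by
  rw [zeta_eq_inv]
  exact (Complex.isPrimitiveRoot_exp r (by omega)).inv

theorem zeta_pow_r {r : ℕ} (hr : 1 ≤ r) : zeta r ^ r = 1 :=
  (isPrimitiveRoot_zeta hr).pow_eq_one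

theorem zeta_pow_mod {r : ℕ} (hr : 1 ≤ r) (k : ℕ) : zeta r ^ k = zeta r ^ (k % r) :=
  pow_eq_pow_mod (zeta_pow_r hr) k

theorem zeta_pow_inj {r : ℕ} (hr : 1 ≤ r) {a b : ℕ} (h : zeta r ^ a = zeta r ^ b) :
    a % r = b % r := by
  rw [zeta_pow_mod hr a, zeta_pow_mod hr b] at h
  exact (isPrimitiveRoot_zeta hr).pow_inj (Nat.mod_lt a (by omega)) (Nat.mod_lt b (by omega)) h

theorem zeta_pow_congr {r : ℕ} (hr : 1 ≤ r) {a b : ℕ} (h : a % r = b % r) :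
    zeta r ^ a = zeta r ^ b := by
  rw [zeta_pow_mod hr a, zeta_pow_mod hr b, h]

/-- The exponential appearing in `CrFixed` is a power of `zeta`. -/
theorem exp_eq_zeta_pow {r : ℕ} (hr : 1 ≤ r) (j : ℕ) :
    Complex.exp (-(2 * (Real.pi : ℂ) * Complex.I * (j : ℂ)) / (r : ℂ)) = zeta r ^ j := by
  rw [zeta, ← Complex.exp_nat_mul]
  congr 1
  ring

/-- The roots-of-unity averaging sum. -/
theorem zeta_avg {r : ℕ} (hr : 1 ≤ r) (k m : ℕ) :
    (∑ j ∈ Finset.range r, (zeta r ^ j) ^ k * ((zeta r ^ j) ^ m)⁻¹) =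
      if k % r = m % r then (r : ℂ) else 0 := by
  have hznm : ∀ a : ℕ, zeta r ^ a ≠ 0 := fun a => pow_ne_zero a (zeta_ne_zero r)
  set u : ℂ := zeta r ^ k * (zeta r ^ m)⁻¹ with hu
  have hterm : ∀ j, (zeta r ^ j) ^ k * ((zeta r ^ j) ^ m)⁻¹ = u ^ j := by
    intro j
    rw [hu, ← pow_mul, ← pow_mul, mul_comm j k, mul_comm j m, pow_mul, pow_mul,
      ← inv_pow, ← mul_pow]
  rw [Finset.sum_congr rfl (fun j _ => hterm j)]
  have hur : u ^ r = 1 := by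
    rw [hu, mul_pow, inv_pow, pow_right_comm, pow_right_comm (zeta r) m r, zeta_pow_r hr,
      one_pow, one_pow, inv_one, mul_one]
  by_cases h : k % r = m % r
  · have hu1 : u = 1 := by
      rw [hu, zeta_pow_congr hr h, mul_inv_cancel₀ (hznm m)]
    rw [if_pos h, hu1]
    simp
  · have hu1 : u ≠ 1 := by
      intro hcon
      apply h
      apply zeta_pow_inj hr
      have := congrArg (fun z => z * zeta r ^ m) hcon
      simpa [hu, mul_assoc, inv_mul_cancel₀ (hznm m)] using this
    rw [if_neg h, geom_sum_eq hu1, hur, sub_self, zero_div]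

theorem coeff_eq_zero_of_degreeLT {n : ℕ} {p : Polynomial ℂ}
    (hp : p ∈ Polynomial.degreeLT ℂ n) {k : ℕ} (hk : n ≤ k) : p.coeff k = 0 := by
  apply Polynomial.coeff_eq_zero_of_degree_lt
  exact lt_of_lt_of_le (Polynomial.mem_degreeLT.mp hp) (by exact_mod_cast hk)

theorem X_pow_mem_degreeLT {n k : ℕ} (hk : k < n) :
    (Polynomial.X : Polynomial ℂ) ^ k ∈ Polynomial.degreeLT ℂ n := by
  rw [Polynomial.mem_degreeLT, Polynomial.degree_X_pow]
  exact_mod_cast hk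

theorem span_smul_eq {ι : Type*} (f : ι → Polynomial ℂ) (a : ι → ℂ) (ha : ∀ i, a i ≠ 0) :
    Submodule.span ℂ (Set.range fun i => a i • f i) = Submodule.span ℂ (Set.range f) := by
  apply le_antisymm
  · rw [Submodule.span_le]
    rintro _ ⟨i, rfl⟩
    exact Submodule.smul_mem _ _ (Submodule.subset_span ⟨i, rfl⟩)
  · rw [Submodule.span_le]
    rintro _ ⟨i, rfl⟩
    have : f i = (a i)⁻¹ • (a i • f i) := by
      rw [smul_smul, inv_mul_cancel₀ (ha i), one_smul]
    rw [this]
    exact Submodule.smul_mem _ _ (Submodule.subset_span ⟨i, rfl⟩)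

/-- If each coefficient-support of `p` is congruent to `m` mod `r`,
then `p` is an eigenvector of `rotMap u` for `u^r = 1`. -/
theorem rotMap_eigen {r : ℕ} (hr : 1 ≤ r) {u : ℂ} (hu : u ^ r = 1) {p : Polynomial ℂ} {m : ℕ}
    (hsupp : ∀ k, p.coeff k ≠ 0 → k % r = m % r) : rotMap u p = u ^ m • p := by
  apply Polynomial.ext
  intro k
  rw [rotMap_coeff, Polynomial.coeff_smul]
  by_cases h : p.coeff k = 0
  · rw [h]; simp
  · have hk := hsupp k h
    rw [pow_eq_pow_mod hu k, pow_eq_pow_mod hu m, hk]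
    rfl

/-- `CrFixed` in terms of powers of `zeta`. -/
theorem crFixed_iff_zeta {r : ℕ} (hr : 1 ≤ r) (x : Submodule ℂ (Polynomial ℂ)) :
    CrFixed r x ↔ ∀ j, j < r → Submodule.map (rotMap (zeta r ^ j)) x = x := by
  constructor
  · intro h j hj
    have := h ⟨j, hj⟩
    rwa [exp_eq_zeta_pow hr] at this
  · intro h j
    rw [exp_eq_zeta_pow hr]
    exact h j j.isLt

/-- A subspace spanned by `rotMap (zeta r)`-eigenvectors is `C_r`-fixed. -/
theorem crFixed_of_eigenbasis {r : ℕ} (hr : 1 ≤ r) {ι : Type*}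
    (f : ι → Polynomial ℂ) (m : ι → ℕ)
    (hsupp : ∀ i k, (f i).coeff k ≠ 0 → k % r = m i % r) :
    CrFixed r (Submodule.span ℂ (Set.range f)) := by
  rw [crFixed_iff_zeta hr]
  intro j hj
  have hu : (zeta r ^ j) ^ r = 1 := by
    rw [← pow_mul, mul_comm j r, pow_mul, zeta_pow_r hr, one_pow]
  rw [Submodule.map_span, ← Set.range_comp]
  have heig : ∀ i, (rotMap (zeta r ^ j) ∘ f) i = ((zeta r ^ j) ^ m i) • f i := by
    intro i
    exact rotMap_eigen hr hu (hsupp i)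
  rw [show (rotMap (zeta r ^ j)) ∘ f = fun i => ((zeta r ^ j) ^ m i) • f i from funext heig]
  exact span_smul_eq f _ (fun i => pow_ne_zero _ (pow_ne_zero _ (zeta_ne_zero r)))

end S17



open Polynomial Finset

namespace S17

theorem range_snoc {n : ℕ} {α : Type*} (f : Fin n → α) (x : α) :
    Set.range (Fin.snoc f x : Fin (n + 1) → α) = insert x (Set.range f) := by
  ext y
  constructor
  · rintro ⟨i, rfl⟩
    induction i using Fin.lastCases with
    | last => left; rw [Fin.snoc_last]
    | cast j => right; exact ⟨j, by rw [Fin.snoc_castSucc]⟩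
  · rintro (rfl | ⟨j, rfl⟩)
    · exact ⟨Fin.last n, Fin.snoc_last _ _⟩
    · exact ⟨j.castSucc, Fin.snoc_castSucc _ _ _⟩

theorem linearIndependent_snoc {n : ℕ} {f : Fin n → Polynomial ℂ} {x : Polynomial ℂ}
    (hf : LinearIndependent ℂ f) (hx : x ∉ Submodule.span ℂ (Set.range f)) :
    LinearIndependent ℂ (Fin.snoc f x : Fin (n + 1) → Polynomial ℂ) := by
  have hcons : LinearIndependent ℂ (Fin.cons x f : Fin (n + 1) → Polynomial ℂ) :=
    hf.fin_cons hx
  have heq : (Fin.cons x f : Fin (n + 1) → Polynomial ℂ) =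
      (Fin.snoc f x : Fin (n + 1) → Polynomial ℂ) ∘ ⇑(finRotate (n + 1)).symm := by
    funext i
    induction i using Fin.cases with
    | zero =>
      have h0 : (finRotate (n + 1)).symm 0 = Fin.last n := by
        rw [Equiv.symm_apply_eq, finRotate_last]
      simp [h0]
    | succ j =>
      have hs : (finRotate (n + 1)).symm j.succ = j.castSucc := by
        rw [Equiv.symm_apply_eq, finRotate_succ_apply, Fin.coeSucc_eq_succ]
      simp [hs]
  rw [heq] at hcons
  exact (linearIndependent_equiv (finRotate (n + 1)).symm).mp hcons

/-- Existence of a reduced echelon basis. -/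
theorem exists_echelon (n : ℕ) : ∀ (d : ℕ) (x : Submodule ℂ (Polynomial ℂ)),
    x ≤ Polynomial.degreeLT ℂ n → Module.finrank ℂ x = d →
    ∃ (f : Fin d → Polynomial ℂ) (δ : Fin d → ℕ), StrictMono δ ∧ (∀ i, δ i < n) ∧
      LinearIndependent ℂ f ∧ Submodule.span ℂ (Set.range f) = x ∧
      (∀ i, f i ∈ x) ∧
      (∀ i i', (f i).coeff (δ i') = if i = i' then 1 else 0) ∧
      (∀ i j, (f i).coeff j ≠ 0 → j ≤ δ i) := by
  intro d
  induction d with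
  | zero =>
    intro x hle hrank
    haveI : FiniteDimensional ℂ (Polynomial.degreeLT ℂ n) :=
      Module.Finite.equiv (Polynomial.degreeLTEquiv ℂ n).symm
    haveI : FiniteDimensional ℂ x := Submodule.finiteDimensional_of_le hle
    have hx : x = ⊥ := Submodule.finrank_eq_zero.mp hrank
    refine ⟨Fin.elim0, Fin.elim0, fun i => i.elim0, fun i => i.elim0,
      linearIndependent_empty_type, ?_, fun i => i.elim0, fun i => i.elim0, fun i => i.elim0⟩
    rw [Set.range_eq_empty, Submodule.span_empty, hx]
  | succ d ih =>
    intro x hle hrank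
    classical
    haveI : FiniteDimensional ℂ (Polynomial.degreeLT ℂ n) :=
      Module.Finite.equiv (Polynomial.degreeLTEquiv ℂ n).symm
    haveI : FiniteDimensional ℂ x := Submodule.finiteDimensional_of_le hle
    have hxne : x ≠ ⊥ := by
      intro h
      rw [Submodule.finrank_eq_zero.mpr h] at hrank
      omega
    obtain ⟨p₀, hp₀x, hp₀ne⟩ := (Submodule.ne_bot_iff x).mp hxne
    have hdeg : ∀ p, p ∈ x → p ≠ 0 → p.natDegree < n := by
      intro p hpx hpne
      rw [Polynomial.natDegree_lt_iff_degree_lt hpne]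
      exact Polynomial.mem_degreeLT.mp (hle hpx)
    have hn1 : 1 ≤ n := by have := hdeg p₀ hp₀x hp₀ne; omega
    set P : ℕ → Prop := fun m => ∃ p, p ∈ x ∧ p ≠ 0 ∧ p.natDegree = m with hP
    set dm := Nat.findGreatest P (n - 1) with hdm
    have hPdm : P dm := by
      have h0 : P p₀.natDegree := ⟨p₀, hp₀x, hp₀ne, rfl⟩
      have := Nat.findGreatest_spec (show p₀.natDegree ≤ n - 1 by
        have := hdeg p₀ hp₀x hp₀ne; omega) h0
      rwa [← hdm] at this
    have hdmn : dm < n := by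
      have := Nat.findGreatest_le (P := P) (n - 1)
      omega
    have hmax : ∀ p, p ∈ x → p ≠ 0 → p.natDegree ≤ dm := by
      intro p hpx hpne
      by_contra hcon
      have h1 : dm < p.natDegree := by omega
      rw [hdm] at h1
      have := Nat.findGreatest_is_greatest h1 (show p.natDegree ≤ n - 1 by
        have := hdeg p hpx hpne; omega)
      exact this ⟨p, hpx, hpne, rfl⟩
    obtain ⟨g, hgx, hgne, hgdeg⟩ := hPdm
    set g₁ : Polynomial ℂ := (g.leadingCoeff)⁻¹ • g with hg₁
    have hlne : g.leadingCoeff ≠ 0 := Polynomial.leadingCoeff_ne_zero.mpr hgne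
    have hg₁x : g₁ ∈ x := Submodule.smul_mem x _ hgx
    have hg₁dm : g₁.coeff dm = 1 := by
      rw [hg₁, Polynomial.coeff_smul, ← hgdeg]
      exact inv_mul_cancel₀ hlne
    have hg₁supp : ∀ j, g₁.coeff j ≠ 0 → j ≤ dm := by
      intro j hj
      rw [hg₁, Polynomial.coeff_smul] at hj
      have : g.coeff j ≠ 0 := fun h => hj (by rw [h]; simp)
      have := Polynomial.le_natDegree_of_ne_zero this
      omega
    -- the hyperplane of x with vanishing coefficient dm
    set x' : Submodule ℂ (Polynomial ℂ) :=
      x ⊓ LinearMap.ker (Polynomial.lcoeff ℂ dm) with hx'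
    have hx'le : x' ≤ Polynomial.degreeLT ℂ n := le_trans inf_le_left hle
    have hx'mem : ∀ p, p ∈ x' ↔ p ∈ x ∧ p.coeff dm = 0 := by
      intro p
      rw [hx', Submodule.mem_inf, LinearMap.mem_ker, Polynomial.lcoeff_apply]
    have hx'rank : Module.finrank ℂ x' = d := by
      set φ : x →ₗ[ℂ] ℂ := (Polynomial.lcoeff ℂ dm).comp x.subtype with hφ
      have hφsurj : LinearMap.range φ = ⊤ := by
        rw [LinearMap.range_eq_top]
        intro c
        refine ⟨c • ⟨g₁, hg₁x⟩, ?_⟩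
        rw [hφ, map_smul]
        simp only [LinearMap.comp_apply, Submodule.coe_subtype, Polynomial.lcoeff_apply]
        rw [hg₁dm]
        simp
      have hrn := LinearMap.finrank_range_add_finrank_ker φ
      rw [hφsurj, finrank_top, hrank] at hrn
      have hker : Submodule.map x.subtype (LinearMap.ker φ) = x' := by
        ext p
        rw [Submodule.mem_map, hx'mem]
        constructor
        · rintro ⟨⟨q, hqx⟩, hqker, rfl⟩
          rw [LinearMap.mem_ker, hφ] at hqker
          simp only [LinearMap.comp_apply, Submodule.coe_subtype,
            Polynomial.lcoeff_apply] at hqker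
          exact ⟨hqx, hqker⟩
        · rintro ⟨hpx, hpc⟩
          refine ⟨⟨p, hpx⟩, ?_, rfl⟩
          rw [LinearMap.mem_ker, hφ]
          simpa [Polynomial.lcoeff_apply] using hpc
      have hequiv : Module.finrank ℂ (LinearMap.ker φ) =
          Module.finrank ℂ (Submodule.map x.subtype (LinearMap.ker φ)) :=
        LinearEquiv.finrank_eq (Submodule.equivMapOfInjective x.subtype
          (Submodule.injective_subtype x) (LinearMap.ker φ))
      rw [hker] at hequiv
      have : Module.finrank ℂ ℂ = 1 := Module.finrank_self ℂ
      omega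
    obtain ⟨f', δ', hmono', hlt', hind', hspan', hmem', hcoef', hsupp'⟩ := ih x' hx'le hx'rank
    have hδ'lt : ∀ i, δ' i < dm := by
      intro i
      have hf'x' := hmem' i
      have hf'x : f' i ∈ x := ((hx'mem _).mp hf'x').1
      have hf'c : (f' i).coeff dm = 0 := ((hx'mem _).mp hf'x').2
      have hf'ne : f' i ≠ 0 := by
        intro h
        have := hcoef' i i
        rw [h] at this
        simp at this
      have h1 : δ' i ≤ (f' i).natDegree := Polynomial.le_natDegree_of_ne_zero (by
        rw [hcoef' i i]; simp)
      have h2 := hmax _ hf'x hf'ne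
      have h3 : δ' i ≠ dm := by
        intro h
        have := hcoef' i i
        rw [h, hf'c] at this
        simp at this
      omega
    set g₂ : Polynomial ℂ := g₁ - ∑ i : Fin d, (g₁.coeff (δ' i)) • f' i with hg₂
    have hg₂x : g₂ ∈ x := by
      apply Submodule.sub_mem x hg₁x
      apply Submodule.sum_mem
      intro i _
      exact Submodule.smul_mem x _ ((hx'mem _).mp (hmem' i)).1
    have hg₂pivot : ∀ i', g₂.coeff (δ' i') = 0 := by
      intro i'
      rw [hg₂, Polynomial.coeff_sub, Polynomial.finset_sum_coeff]
      have : ∀ i : Fin d, ((g₁.coeff (δ' i)) • f' i).coeff (δ' i') =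
          if i = i' then g₁.coeff (δ' i') else 0 := by
        intro i
        rw [Polynomial.coeff_smul, hcoef' i i']
        by_cases h : i = i'
        · subst h; simp
        · simp [h]
      rw [Finset.sum_congr rfl (fun i _ => this i), Finset.sum_ite_eq' Finset.univ i'
        (fun _ => g₁.coeff (δ' i'))]
      simp
    have hf'dm : ∀ i, (f' i).coeff dm = 0 := fun i => ((hx'mem _).mp (hmem' i)).2
    have hg₂dm : g₂.coeff dm = 1 := by
      rw [hg₂, Polynomial.coeff_sub, Polynomial.finset_sum_coeff]
      rw [hg₁dm]
      have : ∀ i : Fin d, ((g₁.coeff (δ' i)) • f' i).coeff dm = 0 := by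
        intro i
        rw [Polynomial.coeff_smul, hf'dm i]
        simp
      rw [Finset.sum_congr rfl (fun i _ => this i)]
      simp
    have hg₂supp : ∀ j, g₂.coeff j ≠ 0 → j ≤ dm := by
      intro j hj
      by_contra hcon
      apply hj
      rw [hg₂, Polynomial.coeff_sub, Polynomial.finset_sum_coeff]
      have h1 : g₁.coeff j = 0 := by
        by_contra h
        exact hcon (hg₁supp j h)
      have h2 : ∀ i : Fin d, ((g₁.coeff (δ' i)) • f' i).coeff j = 0 := by
        intro i
        rw [Polynomial.coeff_smul]
        have : (f' i).coeff j = 0 := by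
          by_contra h
          have := hsupp' i j h
          have := hδ'lt i
          omega
        rw [this]; simp
      rw [h1, Finset.sum_congr rfl (fun i _ => h2 i)]
      simp
    have hg₂notin : g₂ ∉ Submodule.span ℂ (Set.range f') := by
      rw [hspan']
      intro h
      have := ((hx'mem _).mp h).2
      rw [hg₂dm] at this
      exact one_ne_zero this
    refine ⟨Fin.snoc f' g₂, Fin.snoc δ' dm, ?_, ?_, linearIndependent_snoc hind' hg₂notin,
      ?_, ?_, ?_, ?_⟩
    · -- StrictMono
      intro i j hij
      induction j using Fin.lastCases with
      | last =>
        induction i using Fin.lastCases with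
        | last => exact absurd hij (lt_irrefl _)
        | cast i' => rw [Fin.snoc_last, Fin.snoc_castSucc]; exact hδ'lt i'
      | cast j' =>
        induction i using Fin.lastCases with
        | last =>
          exfalso
          rw [Fin.lt_def] at hij
          simp only [Fin.val_last, Fin.coe_castSucc] at hij
          have := j'.isLt
          omega
        | cast i' =>
          rw [Fin.snoc_castSucc, Fin.snoc_castSucc]
          exact hmono' (by rwa [Fin.castSucc_lt_castSucc_iff] at hij)
    · -- bounds
      intro i
      induction i using Fin.lastCases with
      | last => rw [Fin.snoc_last]; exact hdmn
      | cast i' => rw [Fin.snoc_castSucc]; exact hlt' i'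
    · -- span
      rw [range_snoc, Submodule.span_insert]
      apply le_antisymm
      · apply sup_le
        · rw [Submodule.span_singleton_le_iff_mem]
          exact hg₂x
        · rw [hspan']
          exact le_trans inf_le_left (le_refl x)
      · intro p hpx
        set q := p - (p.coeff dm) • g₂ with hq
        have hqx' : q ∈ x' := by
          rw [hx'mem]
          constructor
          · exact Submodule.sub_mem x hpx (Submodule.smul_mem x _ hg₂x)
          · rw [hq, Polynomial.coeff_sub, Polynomial.coeff_smul, hg₂dm]
            simp
        have hqmem : q ∈ Submodule.span ℂ {g₂} ⊔ Submodule.span ℂ (Set.range f') := by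
          apply Submodule.mem_sup_right
          rw [hspan']
          exact hqx'
        have : p = q + (p.coeff dm) • g₂ := by rw [hq]; ring
        rw [this]
        apply Submodule.add_mem _ hqmem
        apply Submodule.mem_sup_left
        exact Submodule.smul_mem _ _ (Submodule.mem_span_singleton_self g₂)
    · -- membership
      intro i
      induction i using Fin.lastCases with
      | last => rw [Fin.snoc_last]; exact hg₂x
      | cast i' => rw [Fin.snoc_castSucc]; exact ((hx'mem _).mp (hmem' i')).1
    · -- coefficient matrix
      intro i i'
      induction i using Fin.lastCases with
      | last =>
        induction i' using Fin.lastCases with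
        | last => rw [Fin.snoc_last, Fin.snoc_last, hg₂dm, if_pos rfl]
        | cast j' =>
          rw [Fin.snoc_last, Fin.snoc_castSucc, hg₂pivot j',
            if_neg (by simp [Fin.ext_iff]; have := j'.isLt; omega)]
      | cast ic =>
        induction i' using Fin.lastCases with
        | last =>
          rw [Fin.snoc_castSucc, Fin.snoc_last, hf'dm ic,
            if_neg (by simp [Fin.ext_iff]; have := ic.isLt; omega)]
        | cast j' =>
          rw [Fin.snoc_castSucc, Fin.snoc_castSucc, hcoef' ic j']
          by_cases h : ic = j'
          · subst h; simp
          · rw [if_neg h, if_neg (by simpa [Fin.castSucc_inj] using h)]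
    · -- support bound
      intro i j hj
      induction i using Fin.lastCases with
      | last =>
        rw [Fin.snoc_last] at hj ⊢
        exact hg₂supp j hj
      | cast i' =>
        rw [Fin.snoc_castSucc] at hj ⊢
        exact hsupp' i' j hj

end S17



open Polynomial Finset

namespace S17

theorem coeff_sum_smul {d : ℕ} (c : Fin d → ℂ) (f : Fin d → Polynomial ℂ) (k : ℕ) :
    (∑ i : Fin d, c i • f i).coeff k = ∑ i : Fin d, c i * (f i).coeff k := by
  rw [Polynomial.finset_sum_coeff]
  exact Finset.sum_congr rfl (fun i _ => Polynomial.coeff_smul _ _ _)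

/-- Coordinates w.r.t. an echelon basis are read off at the pivots. -/
theorem coords_eq_pivot {d : ℕ} {f : Fin d → Polynomial ℂ} {δ : Fin d → ℕ}
    (hcoef : ∀ i i', (f i).coeff (δ i') = if i = i' then 1 else 0)
    {c : Fin d → ℂ} {g : Polynomial ℂ} (hg : (∑ k : Fin d, c k • f k) = g) (i' : Fin d) :
    c i' = g.coeff (δ i') := by
  rw [← hg, coeff_sum_smul]
  have : ∀ k : Fin d, c k * (f k).coeff (δ i') = if k = i' then c k else 0 := by
    intro k
    rw [hcoef k i']
    by_cases h : k = i'
    · subst h; simp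
    · simp [h]
  rw [Finset.sum_congr rfl (fun k _ => this k), Finset.sum_ite_eq' Finset.univ i' c]
  simp

/-- Uniqueness of coordinates for a linearly independent family. -/
theorem coords_unique {d : ℕ} {f : Fin d → Polynomial ℂ} (hf : LinearIndependent ℂ f)
    {a b : Fin d → ℂ} (h : (∑ k : Fin d, a k • f k) = ∑ k : Fin d, b k • f k) :
    a = b := by
  have h0 : (∑ k : Fin d, (a k - b k) • f k) = 0 := by
    rw [Finset.sum_congr rfl (fun k _ => sub_smul (a k) (b k) (f k)), Finset.sum_sub_distrib, h,
      sub_self]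
  have h1 := Fintype.linearIndependent_iff.mp hf (fun k => a k - b k) h0
  funext k
  have h2 := h1 k
  exact sub_eq_zero.mp h2

theorem det_transfer {d w : ℕ} (lam : PartitionIn d w) {x : Submodule ℂ (Polynomial ℂ)}
    {f g : Fin d → Polynomial ℂ}
    (hf : LinearIndependent ℂ f) (hfs : Submodule.span ℂ (Set.range f) = x)
    (hg : LinearIndependent ℂ g) (hgs : Submodule.span ℂ (Set.range g) = x)
    (hdet : Matrix.det (Matrix.of fun i i' : Fin d => (g i).coeff (pluckerIndex lam i')) ≠ 0) :
    Matrix.det (Matrix.of fun i i' : Fin d => (f i).coeff (pluckerIndex lam i')) ≠ 0 := by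
  classical
  have hgf : ∀ i, g i ∈ Submodule.span ℂ (Set.range f) := by
    intro i
    rw [hfs, ← hgs]
    exact Submodule.subset_span ⟨i, rfl⟩
  have hfg : ∀ i, f i ∈ Submodule.span ℂ (Set.range g) := by
    intro i
    rw [hgs, ← hfs]
    exact Submodule.subset_span ⟨i, rfl⟩
  choose M hM using fun i => (Submodule.mem_span_range_iff_exists_fun ℂ).mp (hgf i)
  choose N hN using fun i => (Submodule.mem_span_range_iff_exists_fun ℂ).mp (hfg i)
  -- N * M = 1
  have hNM : ∀ i, (∑ k : Fin d, (∑ l : Fin d, N i l * M l k) • f k) = f i := by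
    intro i
    rw [← hN i]
    rw [Finset.sum_congr rfl (fun k (_ : k ∈ Finset.univ) => Finset.sum_smul)]
    rw [Finset.sum_comm]
    apply Finset.sum_congr rfl
    intro l _
    rw [← hM l, Finset.smul_sum]
    apply Finset.sum_congr rfl
    intro k _
    rw [smul_smul]
  have hone : ∀ i, (∑ k : Fin d, (if k = i then (1:ℂ) else 0) • f k) = f i := by
    intro i
    have : ∀ k : Fin d, (if k = i then (1:ℂ) else 0) • f k = if k = i then f k else 0 := by
      intro k
      by_cases h : k = i
      · subst h; simp
      · simp [h]
    rw [Finset.sum_congr rfl (fun k _ => this k), Finset.sum_ite_eq' Finset.univ i f]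
    simp
  have hNMid : (Matrix.of N * Matrix.of M) = (1 : Matrix (Fin d) (Fin d) ℂ) := by
    ext i k
    have := congrFun (coords_unique hf ((hNM i).trans (hone i).symm)) k
    simpa [Matrix.mul_apply, Matrix.one_apply, eq_comm] using this
  have hdetM : Matrix.det (Matrix.of M) ≠ 0 := by
    intro h
    have := congrArg Matrix.det hNMid
    rw [Matrix.det_mul, h, mul_zero, Matrix.det_one] at this
    exact one_ne_zero this.symm
  have hmat : (Matrix.of fun i i' : Fin d => (g i).coeff (pluckerIndex lam i')) =
      Matrix.of M * (Matrix.of fun i i' : Fin d => (f i).coeff (pluckerIndex lam i')) := by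
    ext i i'
    rw [Matrix.mul_apply]
    simp only [Matrix.of_apply]
    rw [← hM i, coeff_sum_smul]
  intro h
  apply hdet
  rw [hmat, Matrix.det_mul, h, mul_zero]

theorem exists_perm_of_det_ne_zero {d : ℕ} {M : Matrix (Fin d) (Fin d) ℂ} (h : M.det ≠ 0) :
    ∃ σ : Equiv.Perm (Fin d), ∀ i, M (σ i) i ≠ 0 := by
  classical
  by_contra hcon
  push_neg at hcon
  apply h
  rw [Matrix.det_apply]
  apply Finset.sum_eq_zero
  intro σ _
  obtain ⟨i, hi⟩ := hcon σ
  rw [Finset.prod_eq_zero (f := fun j => M (σ j) j) (Finset.mem_univ i) hi]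
  simp

theorem resCount_betaSet {d w : ℕ} (r : ℕ) (lam : PartitionIn d w) (t : ℕ) :
    resCount r (betaSet lam) t =
      (Finset.univ.filter (fun i : Fin d => pluckerIndex lam i % r = t)).card := by
  classical
  rw [resCount, betaSet_eq_image, Finset.filter_image,
    Finset.card_image_of_injective _ (pluckerIndex_strictMono lam).injective]

theorem card_filter_comp_perm {d : ℕ} (σ : Equiv.Perm (Fin d)) (p : Fin d → Prop)
    [DecidablePred p] :
    (Finset.univ.filter fun i => p (σ i)).card = (Finset.univ.filter p).card := by
  classical
  apply Finset.card_bij (fun i _ => σ i)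
  · intro i hi
    simp only [Finset.mem_filter, Finset.mem_univ, true_and] at hi ⊢
    exact hi
  · intro i _ j _ hij
    exact σ.injective hij
  · intro j hj
    simp only [Finset.mem_filter, Finset.mem_univ, true_and] at hj
    exact ⟨σ.symm j, by simp [hj]⟩

/-- For a `C_r`-fixed point, an echelon basis consists of eigenvectors. -/
theorem crFixed_support {d r : ℕ} (hr : 1 ≤ r) {x : Submodule ℂ (Polynomial ℂ)}
    (hfix : CrFixed r x) {f : Fin d → Polynomial ℂ} {δ : Fin d → ℕ}
    (hind : LinearIndependent ℂ f) (hspan : Submodule.span ℂ (Set.range f) = x)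
    (hcoef : ∀ i i', (f i).coeff (δ i') = if i = i' then 1 else 0)
    (i : Fin d) (k : ℕ) (hk : (f i).coeff k ≠ 0) : k % r = δ i % r := by
  classical
  have hfx : ∀ i', f i' ∈ x := by
    intro i'
    rw [← hspan]
    exact Submodule.subset_span ⟨i', rfl⟩
  have hmap := (crFixed_iff_zeta hr x).mp hfix
  set g : Polynomial ℂ := (r : ℂ)⁻¹ •
    ∑ j ∈ Finset.range r, ((zeta r ^ j) ^ (δ i))⁻¹ • rotMap (zeta r ^ j) (f i) with hg
  have hgx : g ∈ x := by
    apply Submodule.smul_mem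
    apply Submodule.sum_mem
    intro j hj
    apply Submodule.smul_mem
    rw [← hmap j (Finset.mem_range.mp hj)]
    exact Submodule.mem_map_of_mem (hfx i)
  have hgcoeff : ∀ k', g.coeff k' =
      (if k' % r = δ i % r then 1 else 0) * (f i).coeff k' := by
    intro k'
    rw [hg, Polynomial.coeff_smul, Polynomial.finset_sum_coeff]
    have hterm : ∀ j, (((zeta r ^ j) ^ (δ i))⁻¹ • rotMap (zeta r ^ j) (f i)).coeff k' =
        ((zeta r ^ j) ^ k' * ((zeta r ^ j) ^ (δ i))⁻¹) * (f i).coeff k' := by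
      intro j
      rw [Polynomial.coeff_smul, rotMap_coeff]
      simp [smul_eq_mul]
      ring
    rw [Finset.sum_congr rfl (fun j _ => hterm j), ← Finset.sum_mul, zeta_avg hr k' (δ i)]
    by_cases h : k' % r = δ i % r
    · rw [if_pos h, if_pos h, smul_eq_mul, ← mul_assoc,
        inv_mul_cancel₀ (show (r:ℂ) ≠ 0 by exact_mod_cast (by omega : r ≠ 0))]
    · rw [if_neg h, if_neg h]
      simp
  -- g = f i
  obtain ⟨c, hc⟩ := (Submodule.mem_span_range_iff_exists_fun ℂ).mp (by rw [hspan]; exact hgx)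
  have hcval : ∀ i', c i' = if i' = i then 1 else 0 := by
    intro i'
    rw [coords_eq_pivot hcoef hc i', hgcoeff (δ i'), hcoef i i']
    by_cases h : i' = i
    · subst h
      rw [if_pos rfl, if_pos rfl, mul_one]
    · rw [if_neg (show ¬ i = i' from fun hh => h hh.symm), mul_zero, if_neg h]
  have hgf : g = f i := by
    rw [← hc, Finset.sum_congr rfl (fun k' (_ : k' ∈ Finset.univ) => by rw [hcval k'])]
    have : ∀ k' : Fin d, (if k' = i then (1:ℂ) else 0) • f k' = if k' = i then f k' else 0 := by
      intro k'
      by_cases h : k' = i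
      · subst h; simp
      · simp [h]
    rw [Finset.sum_congr rfl (fun k' _ => this k'), Finset.sum_ite_eq' Finset.univ i f]
    simp
  have := hgcoeff k
  rw [hgf] at this
  by_contra hcon
  rw [if_neg hcon, zero_mul] at this
  exact hk this

end S17



open Polynomial Finset

namespace S17

theorem linearIndependent_X_pow {d : ℕ} (b : Fin d → ℕ) (hb : Function.Injective b) :
    LinearIndependent ℂ (fun i => (Polynomial.X : Polynomial ℂ) ^ b i) := by
  rw [Fintype.linearIndependent_iff]
  intro g hg i
  have hco := congrArg (fun p => Polynomial.coeff p (b i)) hg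
  simp only [Polynomial.finset_sum_coeff, Polynomial.coeff_smul, Polynomial.coeff_X_pow,
    Polynomial.coeff_zero, smul_eq_mul] at hco
  have hterm : ∀ k : Fin d, g k * (if b i = b k then (1:ℂ) else 0) = if k = i then g k else 0 := by
    intro k
    by_cases h : k = i
    · subst h; simp
    · rw [if_neg (show ¬ b i = b k from fun hh => h (hb hh).symm), mul_zero, if_neg h]
  rw [Finset.sum_congr rfl (fun k _ => hterm k), Finset.sum_ite_eq' Finset.univ i g] at hco
  simpa using hco

/-- The monomial point attached to an arbitrary partition. -/
theorem monomial_point {n d r : ℕ} (hd : 0 < d) (hdn : d < n) (hr : 1 ≤ r)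
    (kappa : PartitionIn d (n - d)) :
    ∃ x : Submodule ℂ (Polynomial ℂ), IsGrPoint n d x ∧ CrFixed r x ∧
      ∀ lam : PartitionIn d (n - d), PluckerNonzero d lam x → lam = kappa := by
  classical
  set b : Fin d → ℕ := fun i => pluckerIndex kappa i with hbdef
  have hbinj : Function.Injective b := (pluckerIndex_strictMono kappa).injective
  have hblt : ∀ i, b i < n := by
    intro i
    simp only [hbdef]
    have := pluckerIndex_lt kappa i
    omega
  set f : Fin d → Polynomial ℂ := fun i => (Polynomial.X : Polynomial ℂ) ^ b i with hfdef
  have hind : LinearIndependent ℂ f := linearIndependent_X_pow b hbinj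
  refine ⟨Submodule.span ℂ (Set.range f), ⟨?_, ?_⟩, ?_, ?_⟩
  · rw [Submodule.span_le]
    rintro _ ⟨i, rfl⟩
    exact X_pow_mem_degreeLT (hblt i)
  · rw [finrank_span_eq_card hind, Fintype.card_fin]
  · apply crFixed_of_eigenbasis hr f b
    intro i k hk
    rw [hfdef] at hk
    simp only [Polynomial.coeff_X_pow] at hk
    have : k = b i := by
      by_contra h
      rw [if_neg h] at hk
      exact hk rfl
    rw [this]
  · intro lam hlam
    obtain ⟨g, hgind, hgspan, hgdet⟩ := hlam
    -- every coefficient support of elements of the span lies in the image of b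
    have hsupp : ∀ i j, (g i).coeff j ≠ 0 → ∃ k, j = b k := by
      intro i j hj
      have hgi : g i ∈ Submodule.span ℂ (Set.range f) := by
        rw [← hgspan]
        exact Submodule.subset_span ⟨i, rfl⟩
      obtain ⟨c, hc⟩ := (Submodule.mem_span_range_iff_exists_fun ℂ).mp hgi
      rw [← hc, Polynomial.finset_sum_coeff] at hj
      by_contra hcon
      push_neg at hcon
      apply hj
      apply Finset.sum_eq_zero
      intro k _
      rw [Polynomial.coeff_smul, hfdef]
      simp only [Polynomial.coeff_X_pow]
      rw [if_neg (fun hh => hcon k hh), smul_zero]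
    -- every column of the Plücker matrix is hit
    have hcols : ∀ i2 : Fin d, ∃ k, pluckerIndex lam i2 = b k := by
      intro i2
      by_contra hcon
      apply hgdet
      apply Matrix.det_eq_zero_of_column_eq_zero i2
      intro i1
      simp only [Matrix.of_apply]
      by_contra hne
      obtain ⟨k, hk⟩ := hsupp i1 _ hne
      exact hcon ⟨k, hk⟩
    have hsubset : betaSet lam ⊆ betaSet kappa := by
      intro c hc
      rw [betaSet_eq_image] at hc ⊢
      obtain ⟨i2, -, rfl⟩ := Finset.mem_image.mp hc
      obtain ⟨k, hk⟩ := hcols i2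
      exact Finset.mem_image.mpr ⟨k, Finset.mem_univ k, hk.symm⟩
    have heq : betaSet lam = betaSet kappa :=
      Finset.eq_of_subset_of_card_le hsubset (by rw [card_betaSet, card_betaSet])
    exact betaSet_inj heq

/-- The pivot partition of an echelon basis has nonzero Plücker coordinate. -/
theorem pivot_plucker_nonzero {n d : ℕ} (hd : 0 < d) (hdn : d < n)
    {x : Submodule ℂ (Polynomial ℂ)} {f : Fin d → Polynomial ℂ} {δ : Fin d → ℕ}
    (hmono : StrictMono δ) (hlt : ∀ k, δ k < d + (n - d))
    (hind : LinearIndependent ℂ f) (hspan : Submodule.span ℂ (Set.range f) = x)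
    (hcoef : ∀ i i', (f i).coeff (δ i') = if i = i' then 1 else 0) :
    PluckerNonzero d (partitionOfFun δ hmono hlt) x := by
  refine ⟨f, hind, hspan, ?_⟩
  have : (Matrix.of fun i i' : Fin d =>
      (f i).coeff (pluckerIndex (partitionOfFun δ hmono hlt) i')) = 1 := by
    ext i i'
    rw [Matrix.of_apply, pluckerIndex_partitionOfFun, hcoef, Matrix.one_apply]
  rw [this, Matrix.det_one]
  exact one_ne_zero

/-- Key converse step: with the non-parallel-Plücker hypothesis every echelon basis
vector has support in a single residue class. -/
theorem support_mod_of_plucker {n d r : ℕ} (hd : 0 < d) (hdn : d < n) (hr : 1 ≤ r)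
    {x : Submodule ℂ (Polynomial ℂ)}
    {f : Fin d → Polynomial ℂ} {δ : Fin d → ℕ} (hmono : StrictMono δ) (hlt : ∀ i, δ i < n)
    (hind : LinearIndependent ℂ f) (hspan : Submodule.span ℂ (Set.range f) = x)
    (hcoef : ∀ i i', (f i).coeff (δ i') = if i = i' then 1 else 0)
    (hsupp : ∀ i j, (f i).coeff j ≠ 0 → j ≤ δ i)
    (H : ∀ lam mu : PartitionIn d (n - d),
      PluckerNonzero d lam x → PluckerNonzero d mu x → RibbonEquiv r lam mu) :
    ∀ i k, (f i).coeff k ≠ 0 → k % r = δ i % r := by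
  classical
  intro i k hk
  by_cases hkδ : k = δ i
  · rw [hkδ]
  have hklt : k < δ i := lt_of_le_of_ne (hsupp i k hk) hkδ
  have hknr : ∀ i', δ i' ≠ k := by
    intro i' hcon
    rcases eq_or_ne i i' with rfl | hne
    · exact hkδ hcon.symm
    · rw [← hcon, hcoef i i', if_neg hne] at hk
      exact hk rfl
  have hlt' : ∀ j, δ j < d + (n - d) := fun j => by have := hlt j; omega
  set lam0 := partitionOfFun δ hmono hlt' with hlam0
  have hplam0 : PluckerNonzero d lam0 x :=
    pivot_plucker_nonzero hd hdn hmono hlt' hind hspan hcoef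
  -- the modified column set
  set ε : Fin d → ℕ := Function.update δ i k with hε
  have hεval : ∀ i2, ε i2 = if i2 = i then k else δ i2 := by
    intro i2
    rw [hε, Function.update_apply]
  have hεinj : Function.Injective ε := by
    intro a b hab
    rw [hεval a, hεval b] at hab
    by_cases ha : a = i <;> by_cases hb' : b = i
    · rw [ha, hb']
    · rw [if_pos ha, if_neg hb'] at hab
      exact absurd hab.symm (hknr b)
    · rw [if_neg ha, if_pos hb'] at hab
      exact absurd hab (hknr a)
    · rw [if_neg ha, if_neg hb'] at hab
      exact hmono.injective hab
  set s' : Finset ℕ := Finset.image ε Finset.univ with hs'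
  have hcard' : s'.card = d := by
    rw [hs', Finset.card_image_of_injective _ hεinj, Finset.card_univ, Fintype.card_fin]
  set J : Fin d → ℕ := ⇑(s'.orderEmbOfFin hcard') with hJ
  have hJmono : StrictMono J := (s'.orderEmbOfFin hcard').strictMono
  have hJmem : ∀ i2, J i2 ∈ s' := fun i2 => Finset.orderEmbOfFin_mem s' hcard' i2
  have hεlt : ∀ i2, ε i2 < d + (n - d) := by
    intro i2
    rw [hεval i2]
    by_cases h : i2 = i
    · rw [if_pos h]
      have := hlt i
      omega
    · rw [if_neg h]
      exact hlt' i2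
  have hJlt : ∀ i2, J i2 < d + (n - d) := by
    intro i2
    have := hJmem i2
    rw [hs'] at this
    obtain ⟨k2, -, hk2⟩ := Finset.mem_image.mp this
    rw [← hk2]
    exact hεlt k2
  set mu := partitionOfFun J hJmono hJlt with hmu
  -- the permutation matching ε with its sorted enumeration J
  have hJex : ∀ i2, ∃ k2, ε k2 = J i2 := by
    intro i2
    have := hJmem i2
    rw [hs'] at this
    obtain ⟨k2, -, hk2⟩ := Finset.mem_image.mp this
    exact ⟨k2, hk2⟩
  choose τf hτf using hJex
  have hτinj : Function.Injective τf := by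
    intro a b hab
    apply hJmono.injective
    rw [← hτf a, ← hτf b, hab]
  have hτbij : Function.Bijective τf := Finite.injective_iff_bijective.mp hτinj
  set τ : Equiv.Perm (Fin d) := Equiv.ofBijective τf hτbij with hτ
  -- the matrix with columns ε
  set A : Matrix (Fin d) (Fin d) ℂ := Matrix.of fun i1 i2 => (f i1).coeff (ε i2) with hA
  have hAval : ∀ i1 i2, A i1 i2 =
      if i2 = i then (f i1).coeff k else (if i1 = i2 then 1 else 0) := by
    intro i1 i2
    rw [hA, Matrix.of_apply, hεval i2]
    by_cases h : i2 = i
    · rw [if_pos h, if_pos h]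
    · rw [if_neg h, if_neg h, hcoef i1 i2]
  have hdetA : A.det ≠ 0 := by
    intro hdet
    obtain ⟨v, hvne, hv⟩ := Matrix.exists_mulVec_eq_zero_iff.mpr hdet
    have hrow : ∀ i1, (∑ i2 : Fin d, A i1 i2 * v i2) = 0 := by
      intro i1
      have := congrFun hv i1
      rwa [Matrix.mulVec, dotProduct] at this
    have hsumform : ∀ i1, (∑ i2 : Fin d, A i1 i2 * v i2) =
        (f i1).coeff k * v i + (if i1 = i then 0 else v i1) := by
      intro i1
      rw [← Finset.add_sum_erase Finset.univ (fun i2 => A i1 i2 * v i2) (Finset.mem_univ i)]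
      congr 1
      · rw [hAval i1 i, if_pos rfl]
      · have hterm : ∀ i2 ∈ Finset.univ.erase i, A i1 i2 * v i2 =
            if i1 = i2 then v i2 else 0 := by
          intro i2 hi2
          rw [hAval i1 i2, if_neg (Finset.ne_of_mem_erase hi2)]
          by_cases h : i1 = i2
          · rw [if_pos h, if_pos h, one_mul]
          · rw [if_neg h, if_neg h, zero_mul]
        rw [Finset.sum_congr rfl hterm, Finset.sum_ite_eq (Finset.univ.erase i) i1 v]
        by_cases h : i1 = i
        · rw [if_pos h, if_neg (by simp [h])]
        · rw [if_neg h, if_pos (by simp [h])]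
    have hvi : v i = 0 := by
      have := hrow i
      rw [hsumform i, if_pos rfl, add_zero] at this
      exact (mul_eq_zero.mp this).resolve_left hk
    have hvall : v = 0 := by
      funext i1
      by_cases h : i1 = i
      · rw [h, hvi]; rfl
      · have := hrow i1
        rw [hsumform i1, if_neg h, hvi, mul_zero, zero_add] at this
        rw [this]; rfl
    exact hvne hvall
  have hpmu : PluckerNonzero d mu x := by
    refine ⟨f, hind, hspan, ?_⟩
    have hmat : (Matrix.of fun i1 i2 : Fin d => (f i1).coeff (pluckerIndex mu i2)) =
        A.submatrix id ⇑τ := by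
      ext i1 i2
      rw [Matrix.of_apply, hmu, pluckerIndex_partitionOfFun, Matrix.submatrix_apply, hA,
        Matrix.of_apply, id_eq]
      rw [show ε (τ i2) = J i2 from hτf i2]
    rw [hmat, Matrix.det_permute']
    intro hcon
    rcases mul_eq_zero.mp hcon with h | h
    · have := Equiv.Perm.sign τ
      rcases Int.units_eq_one_or (Equiv.Perm.sign τ) with hs | hs <;> rw [hs] at h <;>
        simpa using h
    · exact hdetA h
  -- now conclude via the hypothesis H
  have hequiv := H lam0 mu hplam0 hpmu
  have hsum := ribbonEquiv_betaSum hr hequiv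
  have hbs1 : betaSum lam0 = ∑ i2 : Fin d, δ i2 := by
    rw [betaSum, hlam0, betaSet_partitionOfFun, Finset.sum_image
      (fun a _ b _ hab => hmono.injective hab)]
    rfl
  have hbsets : betaSet mu = s' := by
    rw [hmu, betaSet_partitionOfFun]
    apply Finset.eq_of_subset_of_card_le
    · intro c hc
      obtain ⟨k2, -, rfl⟩ := Finset.mem_image.mp hc
      exact hJmem k2
    · rw [hcard', Finset.card_image_of_injective _ hJmono.injective, Finset.card_univ,
        Fintype.card_fin]
  have hbs2 : betaSum mu = ∑ i2 : Fin d, ε i2 := by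
    rw [betaSum, hbsets, hs', Finset.sum_image (fun a _ b _ hab => hεinj hab)]
    rfl
  set S : ℕ := ∑ i2 ∈ Finset.univ.erase i, δ i2 with hS
  have hsplit1 : (∑ i2 : Fin d, δ i2) = δ i + S :=
    (Finset.add_sum_erase _ δ (Finset.mem_univ i)).symm
  have hsplit2 : (∑ i2 : Fin d, ε i2) = k + S := by
    rw [hε, Finset.sum_update_of_mem (Finset.mem_univ i)]
    congr 1
    rw [hS, Finset.erase_eq]
  have h1 : (δ i + S) % r = (k + S) % r := by
    rw [← hsplit1, ← hsplit2, ← hbs1, ← hbs2]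
    exact hsum
  have hmodeq : δ i % r = k % r := Nat.ModEq.add_right_cancel' S h1
  exact hmodeq.symm

end S17



open Polynomial Finset

theorem statement17 (d n r : ℕ) (hd : 0 < d) (hdn : d < n) (hr : 1 ≤ r) :
    (∀ x : Submodule ℂ (Polynomial ℂ), IsGrPoint n d x →
      (CrFixed r x ↔
        ∀ lam mu : PartitionIn d (n - d),
          PluckerNonzero d lam x → PluckerNonzero d mu x → RibbonEquiv r lam mu)) ∧
    (∀ kappa : PartitionIn d (n - d), IsRCore r kappa →
      {x : Submodule ℂ (Polynomial ℂ) |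
        IsGrPoint n d x ∧ CrFixed r x ∧
        ∀ lam : PartitionIn d (n - d),
          PluckerNonzero d lam x → RibbonEquiv r lam kappa}.Nonempty) ∧
    (∀ x : Submodule ℂ (Polynomial ℂ), IsGrPoint n d x → CrFixed r x →
      ∃! kappa : PartitionIn d (n - d), IsRCore r kappa ∧
        ∀ lam : PartitionIn d (n - d),
          PluckerNonzero d lam x → RibbonEquiv r lam kappa) := by
  classical
  have hforward : ∀ x : Submodule ℂ (Polynomial ℂ), IsGrPoint n d x → CrFixed r x →
      ∀ lam mu : PartitionIn d (n - d), PluckerNonzero d lam x → PluckerNonzero d mu x →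
        RibbonEquiv r lam mu := by
    intro x hgr hfix lam mu hlam hmu
    obtain ⟨f, δ, hmono, hlt, hind, hspan, hmem, hcoef, hsupp⟩ :=
      S17.exists_echelon n d x hgr.1 hgr.2
    have hsm : ∀ i k, (f i).coeff k ≠ 0 → k % r = δ i % r :=
      fun i k hk => S17.crFixed_support hr hfix hind hspan hcoef i k hk
    apply (S17.resCount_eq_iff_ribbonEquiv hr lam mu).mp
    intro t
    have key : ∀ nu : PartitionIn d (n - d), PluckerNonzero d nu x →
        S17.resCount r (S17.betaSet nu) t =
          (Finset.univ.filter (fun i : Fin d => δ i % r = t)).card := by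
      intro nu hnu
      obtain ⟨g, hgind, hgspan, hgdet⟩ := hnu
      have hfdet := S17.det_transfer nu hind hspan hgind hgspan hgdet
      obtain ⟨σ, hσ⟩ := S17.exists_perm_of_det_ne_zero hfdet
      have hmod : ∀ i2, pluckerIndex nu i2 % r = δ (σ i2) % r := by
        intro i2
        apply hsm (σ i2) (pluckerIndex nu i2)
        have := hσ i2
        simpa using this
      rw [S17.resCount_betaSet]
      have hfc : Finset.univ.filter (fun i2 : Fin d => pluckerIndex nu i2 % r = t)
          = Finset.univ.filter (fun i2 : Fin d => δ (σ i2) % r = t) := by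
        apply Finset.filter_congr
        intro i2 _
        exact iff_of_eq (by rw [hmod i2])
      rw [hfc, S17.card_filter_comp_perm σ (fun i => δ i % r = t)]
    rw [key lam hlam, key mu hmu]
  refine ⟨?_, ?_, ?_⟩
  · intro x hgr
    constructor
    · exact hforward x hgr
    · intro H
      obtain ⟨f, δ, hmono, hlt, hind, hspan, hmem, hcoef, hsupp⟩ :=
        S17.exists_echelon n d x hgr.1 hgr.2
      have hsm := S17.support_mod_of_plucker hd hdn hr hmono hlt hind hspan hcoef hsupp H
      have := S17.crFixed_of_eigenbasis hr f δ hsm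
      rwa [hspan] at this
  · intro kappa hcore
    obtain ⟨x, hgr, hfix, huniq⟩ := S17.monomial_point hd hdn hr kappa
    exact ⟨x, hgr, hfix, fun lam hl => by rw [huniq lam hl]; exact Relation.EqvGen.refl _⟩
  · intro x hgr hfix
    obtain ⟨f, δ, hmono, hlt, hind, hspan, hmem, hcoef, hsupp⟩ :=
      S17.exists_echelon n d x hgr.1 hgr.2
    have hlt' : ∀ j, δ j < d + (n - d) := fun j => by have := hlt j; omega
    have hplam0 := S17.pivot_plucker_nonzero hd hdn hmono hlt' hind hspan hcoef
    set lam0 := S17.partitionOfFun δ hmono hlt' with hlam0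
    obtain ⟨kappa, hcore, hequiv⟩ := S17.exists_core_equiv hr lam0
    refine ⟨kappa, ⟨hcore, ?_⟩, ?_⟩
    · intro lam hlam
      exact Relation.EqvGen.trans _ _ _ (hforward x hgr hfix lam lam0 hlam hplam0) hequiv
    · rintro kappa' ⟨hcore', hprop'⟩
      have h1 := hprop' lam0 hplam0
      exact S17.core_unique hr hcore' hcore
        (Relation.EqvGen.trans _ _ _ (Relation.EqvGen.symm _ _ h1) hequiv)
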